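/- arXiv:1709.06965 — 3 statements merged into one kernel-verified Lean document; each statement's English description precedes it below -/
import Mathlib

section
/- Let d ≥ 2 and let G be a finite simple graph that admits a crossing-free circular-arc drawing in ℝ^d covered by a family of r circles. Then the linear arboricity of G satisfies la(G) ≤ ⌈3r/2⌉, i.e., the edge set of G can be partitioned into at most r + ⌈r/2⌉ linear forests. -/
open Set

noncomputable section

/-- An `l`-dimensional sphere in `ℝ^d`: the set of points of an `(l+1)`-dimensional affine
subspace `P` of `ℝ^d` at a fixed positive distance `r` from a center `c ∈ P`. -/
def IsSphereDim (d l : ℕ) (S : Set (EuclideanSpace ℝ (Fin d))) : Prop :=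
  ∃ (P : AffineSubspace ℝ (EuclideanSpace ℝ (Fin d))) (c : EuclideanSpace ℝ (Fin d)) (r : ℝ),
    Module.finrank ℝ P.direction = l + 1 ∧ c ∈ P ∧ 0 < r ∧
    S = {x | x ∈ P ∧ dist x c = r}

/-- A circle in `ℝ^d` is a 1-dimensional sphere. -/
def IsCircle (d : ℕ) (S : Set (EuclideanSpace ℝ (Fin d))) : Prop :=
  IsSphereDim d 1 S

/-- An arc in `ℝ^d`: a nonempty compact connected subset of a circle. -/
def IsArc (d : ℕ) (A : Set (EuclideanSpace ℝ (Fin d))) : Prop :=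
  ∃ C, IsCircle d C ∧ A ⊆ C ∧ IsCompact A ∧ IsConnected A

/-- A crossing-free circular-arc drawing of a simple graph `G` in `ℝ^d`:
vertices are mapped injectively to points, every edge `e = uv` is represented by an arc
`arc e` containing the images of `u` and `v`, the arcs of two distinct edges intersect
exactly in the images of the common endpoints of those edges, and the image of a vertex `w`
lies on the arc of an edge `e` only if `w` is an endpoint of `e`. -/
structure CircularArcDrawing (d : ℕ) {V : Type*} (G : SimpleGraph V) where
  pos : V → EuclideanSpace ℝ (Fin d)
  inj : Function.Injective pos
  arc : Sym2 V → Set (EuclideanSpace ℝ (Fin d))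
  arc_isArc : ∀ e ∈ G.edgeSet, IsArc d (arc e)
  endpoint_mem : ∀ e ∈ G.edgeSet, ∀ v ∈ e, pos v ∈ arc e
  crossFree : ∀ e ∈ G.edgeSet, ∀ f ∈ G.edgeSet, e ≠ f →
    arc e ∩ arc f = pos '' {w | w ∈ e ∧ w ∈ f}
  vertex_mem : ∀ e ∈ G.edgeSet, ∀ w, pos w ∈ arc e → w ∈ e

/-- The drawing `D` is covered by the family `𝒞` of sets:
every arc of `D` is contained in some member of `𝒞`. -/
def CircularArcDrawing.CoveredBy {d : ℕ} {V : Type*} {G : SimpleGraph V}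
    (D : CircularArcDrawing d G) (𝒞 : Finset (Set (EuclideanSpace ℝ (Fin d)))) : Prop :=
  ∀ e ∈ G.edgeSet, ∃ C ∈ 𝒞, D.arc e ⊆ C

open Complex

namespace CircleCover



/-- unit circle in ℂ as a set -/
def SC : Set ℂ := Metric.sphere (0:ℂ) 1

lemma mem_SC_iff {z : ℂ} : z ∈ SC ↔ ‖z‖ = 1 := mem_sphere_zero_iff_norm

/-- chart map from circle to ℝ, punctured at q -/
def gq (q z : ℂ) : ℝ := Complex.arg (-((starRingEnd ℂ) q * z))

/-- inverse chart -/
def psi (q : ℂ) (t : ℝ) : ℂ := -q * Complex.exp (t * Complex.I)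

lemma psi_mem {q : ℂ} (hq : q ∈ SC) (t : ℝ) : psi q t ∈ SC := by
  rw [mem_SC_iff] at hq ⊢
  simp [psi, norm_mul, hq, Complex.norm_exp_ofReal_mul_I]

lemma conj_mul_self {q : ℂ} (hq : q ∈ SC) : q * (starRingEnd ℂ) q = 1 := by
  rw [mem_SC_iff] at hq
  rw [Complex.mul_conj, Complex.normSq_eq_norm_sq, hq]
  norm_num

lemma psi_gq {q z : ℂ} (hq : q ∈ SC) (hz : z ∈ SC) : psi q (gq q z) = z := by
  have habs : ‖(-((starRingEnd ℂ) q * z))‖ = 1 := by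
    rw [mem_SC_iff] at hq hz
    simp [map_mul, hq, hz]
  have h1 : Complex.exp ((gq q z : ℝ) * Complex.I) = -((starRingEnd ℂ) q * z) := by
    have := Complex.norm_mul_exp_arg_mul_I (-((starRingEnd ℂ) q * z))
    rw [habs] at this; simpa [gq] using this
  have h2 : psi q (gq q z) = -q * (-((starRingEnd ℂ) q * z)) := by rw [psi, h1]
  rw [h2]
  have hc := conj_mul_self hq
  calc -q * -((starRingEnd ℂ) q * z) = (q * (starRingEnd ℂ) q) * z := by ring
  _ = z := by rw [hc, one_mul]

lemma gq_psi {q : ℂ} (hq : q ∈ SC) {t : ℝ} (ht : t ∈ Ioc (-Real.pi) Real.pi) :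
    gq q (psi q t) = t := by
  have : -((starRingEnd ℂ) q * psi q t) = Complex.exp (t * Complex.I) := by
    rw [psi]; rw [show -((starRingEnd ℂ) q * (-q * Complex.exp (t*Complex.I)))
      = (q * (starRingEnd ℂ) q) * Complex.exp (t*Complex.I) by ring, conj_mul_self hq, one_mul]
  rw [gq, this, Complex.exp_mul_I]
  exact Complex.arg_cos_add_sin_mul_I ht

lemma gq_mem_Ioc (q z : ℂ) : gq q z ∈ Ioc (-Real.pi) Real.pi := Complex.arg_mem_Ioc _

lemma gq_mem_Ioo {q z : ℂ} (hq : q ∈ SC) (hz : z ∈ SC) (hne : z ≠ q) :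
    gq q z ∈ Ioo (-Real.pi) Real.pi := by
  refine ⟨(gq_mem_Ioc q z).1, lt_of_le_of_ne (gq_mem_Ioc q z).2 ?_⟩
  intro h
  have habs : ‖(-((starRingEnd ℂ) q * z))‖ = 1 := by
    rw [mem_SC_iff] at hq hz
    simp [map_mul, hq, hz]
  have habseq := Complex.norm_mul_exp_arg_mul_I (-((starRingEnd ℂ) q * z))
  rw [gq] at h
  rw [habs, h, Complex.ofReal_one, one_mul, Complex.exp_pi_mul_I] at habseq
  have h2 : (starRingEnd ℂ) q * z = 1 := by linear_combination habseq
  have : z = q := by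
    calc z = (q * (starRingEnd ℂ) q) * z := by rw [conj_mul_self hq, one_mul]
    _ = q * ((starRingEnd ℂ) q * z) := by ring
    _ = q := by rw [h2, mul_one]
  exact hne this

lemma continuousAt_gq {q z : ℂ} (hq : q ∈ SC) (hz : z ∈ SC) (hne : z ≠ q) :
    ContinuousAt (gq q) z := by
  have habs : ‖(-((starRingEnd ℂ) q * z))‖ = 1 := by
    rw [mem_SC_iff] at hq hz
    simp [map_mul, hq, hz]
  have hw : -((starRingEnd ℂ) q * z) ∈ Complex.slitPlane := by
    rw [Complex.mem_slitPlane_iff]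
    by_cases him : (-((starRingEnd ℂ) q * z)).im = 0
    · left
      set w := -((starRingEnd ℂ) q * z) with hwdef
      have hwre : w = (w.re : ℂ) := Complex.ext rfl (by simp [him])
      have : |w.re| = 1 := by
        have := habs
        rw [hwre] at this
        simpa using this
      rcases abs_eq (by norm_num : (0:ℝ) ≤ 1) |>.1 this with h1 | h1
      · rw [h1]; norm_num
      · exfalso
        have hw1 : w = -1 := by rw [hwre, h1]; norm_num
        have h2 : (starRingEnd ℂ) q * z = 1 := by
          have : -((starRingEnd ℂ) q * z) = -1 := hw1
          linear_combination -this
        exact hne (by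
          calc z = (q * (starRingEnd ℂ) q) * z := by rw [conj_mul_self hq, one_mul]
          _ = q * ((starRingEnd ℂ) q * z) := by ring
          _ = q := by rw [h2, mul_one])
    · right; exact him
  have hc1 : ContinuousAt (fun z => -((starRingEnd ℂ) q * z)) z := by fun_prop
  exact ContinuousAt.comp (Complex.continuousAt_arg hw) hc1

lemma injOn_gq {q : ℂ} (hq : q ∈ SC) : InjOn (gq q) SC := fun a ha b hb h => by
  rw [← psi_gq hq ha, ← psi_gq hq hb, h]


lemma image_gq_Icc {q : ℂ} {A : Set ℂ} (hq : q ∈ SC) (hA : A ⊆ SC) (hqA : q ∉ A)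
    (hcpt : IsCompact A) (hconn : IsConnected A) :
    ∃ a b : ℝ, a ≤ b ∧ gq q '' A = Icc a b := by
  have hcont : ContinuousOn (gq q) A := fun z hz =>
    (continuousAt_gq hq (hA hz) (fun h => hqA (h ▸ hz))).continuousWithinAt
  have hKc : IsCompact (gq q '' A) := hcpt.image_of_continuousOn hcont
  have hKconn : IsConnected (gq q '' A) := hconn.image _ hcont
  have hne : (gq q '' A).Nonempty := hKconn.nonempty
  refine ⟨sInf (gq q '' A), sSup (gq q '' A), ?_, ?_⟩
  · exact csInf_le_csSup hne hKc.bddBelow hKc.bddAbove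
  · apply Subset.antisymm
    · intro t ht
      exact ⟨csInf_le hKc.bddBelow ht, le_csSup hKc.bddAbove ht⟩
    · exact hKconn.isPreconnected.ordConnected.out (hKc.sInf_mem hne) (hKc.sSup_mem hne)

lemma psi_image_gq {q : ℂ} {A : Set ℂ} (hq : q ∈ SC) (hA : A ⊆ SC) :
    psi q '' (gq q '' A) = A := by
  rw [Set.image_image]
  exact Set.image_congr (fun z hz => psi_gq hq (hA hz)) |>.trans (Set.image_id A)

/-- helper on ℝ : touching intervals -/
lemma touching_intervals {a1 b1 a2 b2 t : ℝ} (h1 : a1 < b1) (h2 : a2 < b2) (hb : b1 ≤ b2)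
    (h : Icc a1 b1 ∩ Icc a2 b2 = {t}) : t = b1 ∧ t = a2 := by
  rw [Icc_inter_Icc, Icc_eq_singleton_iff] at h
  obtain ⟨hmax, hmin⟩ := h
  have hminb : b1 ⊓ b2 = b1 := inf_eq_left.2 hb
  have htb1 : t = b1 := by rw [← hmin, hminb]
  refine ⟨htb1, ?_⟩
  rcases le_total a1 a2 with hs | hs
  · rw [sup_eq_right.2 hs] at hmax; exact hmax.symm
  · exfalso; rw [sup_eq_left.2 hs] at hmax
    rw [hmax, htb1] at h1; exact lt_irrefl _ h1

/-- Two arcs meeting only at p, each nontrivial: their union is a neighborhood of p within SC -/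
lemma pair_nhds {A1 A2 : Set ℂ} {p x1 x2 : ℂ}
    (hA1 : A1 ⊆ SC) (hA2 : A2 ⊆ SC)
    (hc1 : IsCompact A1) (hc2 : IsCompact A2)
    (hn1 : IsConnected A1) (hn2 : IsConnected A2)
    (h12 : A1 ∩ A2 = {p})
    (hx1 : x1 ∈ A1) (hx1p : x1 ≠ p) (hx2 : x2 ∈ A2) (hx2p : x2 ≠ p) :
    ∃ O : Set ℂ, IsOpen O ∧ p ∈ O ∧ O ∩ SC ⊆ A1 ∪ A2 := by
  have hp1 : p ∈ A1 := by have : p ∈ A1 ∩ A2 := h12 ▸ rfl; exact this.1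
  have hp2 : p ∈ A2 := by have : p ∈ A1 ∩ A2 := h12 ▸ rfl; exact this.2
  by_cases hall : ∀ z ∈ SC, z ∈ A1 ∪ A2
  · exact ⟨univ, isOpen_univ, mem_univ _, fun z hz => hall z hz.2⟩
  push_neg at hall
  obtain ⟨q, hqS, hqA⟩ := hall
  have hq1 : q ∉ A1 := fun h => hqA (Or.inl h)
  have hq2 : q ∉ A2 := fun h => hqA (Or.inr h)
  obtain ⟨a1, b1, hab1, hK1⟩ := image_gq_Icc hqS hA1 hq1 hc1 hn1
  obtain ⟨a2, b2, hab2, hK2⟩ := image_gq_Icc hqS hA2 hq2 hc2 hn2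
  have hinj := injOn_gq hqS
  have hinter : gq q '' A1 ∩ gq q '' A2 = {gq q p} := by
    rw [← hinj.image_inter hA1 hA2, h12, Set.image_singleton]
  set t := gq q p with ht
  have htK1 : t ∈ Icc a1 b1 := hK1 ▸ Set.mem_image_of_mem _ hp1
  have htK2 : t ∈ Icc a2 b2 := hK2 ▸ Set.mem_image_of_mem _ hp2
  have hpq : p ≠ q := fun h => hq1 (h ▸ hp1)
  have hs1 : a1 < b1 := by
    rcases eq_or_lt_of_le hab1 with h | h
    · exfalso
      have hx1K : gq q x1 ∈ Icc a1 b1 := hK1 ▸ Set.mem_image_of_mem _ hx1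
      rw [← h, Icc_self, Set.mem_singleton_iff] at hx1K
      have htK1' : t ∈ Icc a1 b1 := htK1
      rw [← h, Icc_self, Set.mem_singleton_iff] at htK1'
      exact hx1p (hinj (hA1 hx1) (hA1 hp1) (hx1K.trans htK1'.symm))
    · exact h
  have hs2 : a2 < b2 := by
    rcases eq_or_lt_of_le hab2 with h | h
    · exfalso
      have hx2K : gq q x2 ∈ Icc a2 b2 := hK2 ▸ Set.mem_image_of_mem _ hx2
      rw [← h, Icc_self, Set.mem_singleton_iff] at hx2K
      have htK2' : t ∈ Icc a2 b2 := htK2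
      rw [← h, Icc_self, Set.mem_singleton_iff] at htK2'
      exact hx2p (hinj (hA2 hx2) (hA2 hp2) (hx2K.trans htK2'.symm))
    · exact h
  have hIcc : Icc a1 b1 ∩ Icc a2 b2 = {t} := by rw [← hK1, ← hK2, hinter]
  -- get interval (s1, s2) around t inside K1 ∪ K2
  have key : ∃ s1 s2 : ℝ, t ∈ Ioo s1 s2 ∧ Ioo s1 s2 ⊆ Icc a1 b1 ∪ Icc a2 b2 := by
    rcases le_total b1 b2 with hb | hb
    · obtain ⟨e1, e2⟩ := touching_intervals hs1 hs2 hb hIcc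
      refine ⟨a1, b2, ⟨e1 ▸ hs1, e2 ▸ hs2⟩, fun x hx => ?_⟩
      rcases le_total x t with h | h
      · exact Or.inl ⟨le_of_lt hx.1, e1 ▸ h⟩
      · exact Or.inr ⟨e2 ▸ h, le_of_lt hx.2⟩
    · obtain ⟨e1, e2⟩ := touching_intervals hs2 hs1 hb (by rwa [Set.inter_comm] at hIcc)
      refine ⟨a2, b1, ⟨e1 ▸ hs2, e2 ▸ hs1⟩, fun x hx => ?_⟩
      rcases le_total x t with h | h
      · exact Or.inr ⟨le_of_lt hx.1, e1 ▸ h⟩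
      · exact Or.inl ⟨e2 ▸ h, le_of_lt hx.2⟩
  obtain ⟨s1, s2, hts, hsub⟩ := key
  have hcont := continuousAt_gq hqS (hA1 hp1) hpq
  have hnh : (gq q)⁻¹' (Ioo s1 s2) ∈ nhds p :=
    hcont.preimage_mem_nhds (isOpen_Ioo.mem_nhds hts)
  have hnh2 : (gq q)⁻¹' (Ioo s1 s2) ∩ {q}ᶜ ∈ nhds p :=
    Filter.inter_mem hnh (compl_singleton_mem_nhds hpq)
  obtain ⟨O, hOsub, hOopen, hpO⟩ := mem_nhds_iff.1 hnh2
  refine ⟨O, hOopen, hpO, fun z hz => ?_⟩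
  have hzS := hz.2
  have hzIoo : gq q z ∈ Ioo s1 s2 := (hOsub hz.1).1
  have hzq : z ≠ q := (hOsub hz.1).2
  rcases hsub hzIoo with h | h
  · left
    have hmem : psi q (gq q z) ∈ psi q '' (gq q '' A1) := Set.mem_image_of_mem _ (hK1 ▸ h)
    rw [psi_image_gq hqS hA1, psi_gq hqS hzS] at hmem
    exact hmem
  · right
    have hmem : psi q (gq q z) ∈ psi q '' (gq q '' A2) := Set.mem_image_of_mem _ (hK2 ▸ h)
    rw [psi_image_gq hqS hA2, psi_gq hqS hzS] at hmem
    exact hmem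


/-- In a T1 space, a connected set with two points has no isolated point. -/
lemma exists_near {X : Type*} [TopologicalSpace X] [T1Space X] {A : Set X} {p x : X}
    (h : IsPreconnected A) (hp : p ∈ A) (hx : x ∈ A) (hxp : x ≠ p)
    {O : Set X} (hO : IsOpen O) (hpO : p ∈ O) : ∃ y, y ∈ A ∩ O ∧ y ≠ p := by
  rcases h O {p}ᶜ hO isOpen_compl_singleton
      (fun a ha => by
        by_cases hap : a = p
        · exact Or.inl (hap ▸ hpO)
        · exact Or.inr hap)
      ⟨p, hp, hpO⟩ ⟨x, hx, hxp⟩ with ⟨y, hyA, hyO, hyp⟩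
  exact ⟨y, ⟨hyA, hyO⟩, hyp⟩

/-- Three arcs in the unit circle pairwise meeting exactly at `p`, each nontrivial: impossible -/
lemma three_arcs {A1 A2 A3 : Set ℂ} {p x1 x2 x3 : ℂ}
    (hA1 : A1 ⊆ SC) (hA2 : A2 ⊆ SC) (hA3 : A3 ⊆ SC)
    (hc1 : IsCompact A1) (hc2 : IsCompact A2) (hc3 : IsCompact A3)
    (hn1 : IsConnected A1) (hn2 : IsConnected A2) (hn3 : IsConnected A3)
    (h12 : A1 ∩ A2 = {p}) (h13 : A1 ∩ A3 = {p}) (h23 : A2 ∩ A3 = {p})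
    (hx1 : x1 ∈ A1) (hx1p : x1 ≠ p) (hx2 : x2 ∈ A2) (hx2p : x2 ≠ p)
    (hx3 : x3 ∈ A3) (hx3p : x3 ≠ p) : False := by
  obtain ⟨O, hOopen, hpO, hOsub⟩ :=
    pair_nhds hA1 hA2 hc1 hc2 hn1 hn2 h12 hx1 hx1p hx2 hx2p
  have hp3 : p ∈ A3 := by
    have : p ∈ A1 ∩ A3 := h13 ▸ rfl
    exact this.2
  obtain ⟨y, ⟨hyA3, hyO⟩, hyp⟩ := exists_near hn3.isPreconnected hp3 hx3 hx3p hOopen hpO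
  have hyS : y ∈ SC := hA3 hyA3
  rcases hOsub ⟨hyO, hyS⟩ with h | h
  · exact hyp (Set.mem_singleton_iff.1 (h13 ▸ (⟨h, hyA3⟩ : y ∈ A1 ∩ A3)))
  · exact hyp (Set.mem_singleton_iff.1 (h23 ▸ (⟨h, hyA3⟩ : y ∈ A2 ∩ A3)))

/-- A cyclic chain of arcs in the unit circle covers it completely. -/
lemma cyclic_cover {n : ℕ} (hn : 3 ≤ n) (A : ZMod n → Set ℂ) (p : ZMod n → ℂ)
    (hsub : ∀ i, A i ⊆ SC) (hcpt : ∀ i, IsCompact (A i)) (hconn : ∀ i, IsConnected (A i))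
    (hp : Function.Injective p)
    (hmem1 : ∀ i, p i ∈ A i) (hmem2 : ∀ i, p (i + 1) ∈ A i)
    (hadj : ∀ i, A i ∩ A (i + 1) = {p (i + 1)}) :
    (⋃ i, A i) = SC := by
  haveI : NeZero n := ⟨by omega⟩
  haveI : Fact (1 < n) := ⟨by omega⟩
  by_contra hne
  have hlt : (⋃ i, A i) ⊂ SC := (Set.iUnion_subset hsub).ssubset_of_ne hne
  obtain ⟨q, hqS, hqU⟩ := Set.exists_of_ssubset hlt
  have hqA : ∀ i, q ∉ A i := fun i h => hqU (Set.mem_iUnion.2 ⟨i, h⟩)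
  have hinj := injOn_gq hqS
  -- each image is an interval
  have hK : ∀ i, ∃ a b : ℝ, a < b ∧ gq q '' A i = Icc a b := by
    intro i
    obtain ⟨a, b, hab, hKi⟩ := image_gq_Icc hqS (hsub i) (hqA i) (hcpt i) (hconn i)
    refine ⟨a, b, ?_, hKi⟩
    rcases eq_or_lt_of_le hab with h | h
    · exfalso
      have h1 : gq q (p i) ∈ Icc a b := hKi ▸ Set.mem_image_of_mem _ (hmem1 i)
      have h2 : gq q (p (i+1)) ∈ Icc a b := hKi ▸ Set.mem_image_of_mem _ (hmem2 i)
      rw [← h, Icc_self, Set.mem_singleton_iff] at h1 h2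
      have : p i = p (i+1) := hinj (hsub i (hmem1 i)) (hsub i (hmem2 i)) (h1.trans h2.symm)
      have : i = i + 1 := hp this
      have : (1 : ZMod n) = 0 := by linear_combination -this
      exact one_ne_zero this
    · exact h
  choose a b hab hKeq using hK
  -- pick the index with maximal upper end
  obtain ⟨m, -, hm⟩ := Finset.exists_max_image Finset.univ b ⟨0, Finset.mem_univ 0⟩
  have hmax : ∀ i, b i ≤ b m := fun i => hm i (Finset.mem_univ i)
  -- intersections of consecutive images
  have hIcc : ∀ i, Icc (a i) (b i) ∩ Icc (a (i+1)) (b (i+1)) = {gq q (p (i+1))} := by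
    intro i
    rw [← hKeq, ← hKeq, ← hinj.image_inter (hsub i) (hsub (i+1)), hadj i, Set.image_singleton]
  -- apply touching for (m-1, m)
  have h1 : gq q (p m) = a m := by
    have h := hIcc (m - 1)
    rw [sub_add_cancel] at h
    exact (touching_intervals (hab (m-1)) (hab m) (hmax (m-1)) h).2
  have h2 : gq q (p (m+1)) = a m := by
    have h := hIcc m
    rw [Set.inter_comm] at h
    exact (touching_intervals (hab (m+1)) (hab m) (hmax (m+1)) h).2
  have : p m = p (m + 1) :=
    hinj (hsub m (hmem1 m)) (hsub m (hmem2 m)) (h1.trans h2.symm)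
  have : m = m + 1 := hp this
  have : (1 : ZMod n) = 0 := by linear_combination -this
  exact one_ne_zero this

/-- An arc with two distinct points is infinite. -/
lemma arc_infinite {A : Set ℂ} {x y : ℂ} (hA : A ⊆ SC) (hcpt : IsCompact A)
    (hconn : IsConnected A) (hx : x ∈ A) (hy : y ∈ A) (hxy : x ≠ y) : A.Infinite := by
  by_cases hfull : ∀ z ∈ SC, z ∈ A
  · -- A ⊇ SC which is infinite
    have h1S : (1 : ℂ) ∈ SC := by rw [mem_SC_iff]; simp
    have hIoo : (Ioo (0:ℝ) 1).Infinite := Set.Ioo_infinite one_pos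
    have hIooIoc : Ioo (0:ℝ) 1 ⊆ Ioc (-Real.pi) Real.pi := fun t ht =>
      ⟨lt_trans (neg_neg_iff_pos.2 Real.pi_pos) ht.1, le_trans ht.2.le (by linarith [Real.two_le_pi])⟩
    have hinjpsi : InjOn (psi 1) (Ioo (0:ℝ) 1) := fun s hs t ht h => by
      rw [← gq_psi h1S (hIooIoc hs), ← gq_psi h1S (hIooIoc ht), h]
    have : (psi 1 '' Ioo (0:ℝ) 1).Infinite := (Set.infinite_image_iff hinjpsi).2 hIoo
    exact this.mono (fun z hz => by
      obtain ⟨t, -, rfl⟩ := hz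
      exact hfull _ (psi_mem h1S t))
  · push_neg at hfull
    obtain ⟨q, hqS, hqA⟩ := hfull
    obtain ⟨a', b', hab, hKeq⟩ := image_gq_Icc hqS hA hqA hcpt hconn
    have hablt : a' < b' := by
      rcases eq_or_lt_of_le hab with h | h
      · exfalso
        have h1 : gq q x ∈ Icc a' b' := hKeq ▸ Set.mem_image_of_mem _ hx
        have h2 : gq q y ∈ Icc a' b' := hKeq ▸ Set.mem_image_of_mem _ hy
        rw [← h, Icc_self, Set.mem_singleton_iff] at h1 h2
        exact hxy (injOn_gq hqS (hA hx) (hA hy) (h1.trans h2.symm))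
      · exact h
    have hKsub : Icc a' b' ⊆ Ioc (-Real.pi) Real.pi := by
      rw [← hKeq]
      rintro t ⟨z, -, rfl⟩
      exact gq_mem_Ioc q z
    have hinjpsi : InjOn (psi q) (Icc a' b') := fun s hs t ht h => by
      rw [← gq_psi hqS (hKsub hs), ← gq_psi hqS (hKsub ht), h]
    have : (psi q '' Icc a' b').Infinite :=
      (Set.infinite_image_iff hinjpsi).2 (Set.Icc_infinite hablt)
    rw [← hKeq, psi_image_gq hqS hA] at this
    exact this


/-- Parametrization of an abstract circle in `ℝ^d` by the unit circle in ℂ. -/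
lemma circle_param {d : ℕ} {C : Set (EuclideanSpace ℝ (Fin d))} (hC : IsCircle d C) :
    ∃ (Φ : ℂ → EuclideanSpace ℝ (Fin d)) (Ψ : EuclideanSpace ℝ (Fin d) → ℂ),
      Continuous Φ ∧ Continuous Ψ ∧ (∀ z, Ψ (Φ z) = z) ∧ C = Φ '' SC := by
  obtain ⟨P, c, r, hdim, hcP, hr, hCeq⟩ := hC
  set E := P.direction with hE
  have hdim2 : Module.finrank ℝ E = 2 := hdim
  let bas : OrthonormalBasis (Fin 2) ℝ E :=
    (stdOrthonormalBasis ℝ E).reindex (finCongr hdim2)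
  let L : ℂ ≃ₗᵢ[ℝ] E := Complex.isometryOfOrthonormal bas
  let Φ : ℂ → EuclideanSpace ℝ (Fin d) := fun z => c + r • ((L z : E) : EuclideanSpace ℝ (Fin d))
  let Ψ : EuclideanSpace ℝ (Fin d) → ℂ := fun x =>
    r⁻¹ • L.symm (E.orthogonalProjectionOnto (x - c))
  have hΦ : Continuous Φ := by
    apply continuous_const.add
    exact (continuous_subtype_val.comp L.continuous).const_smul r
  have hΨ : Continuous Ψ := by
    refine Continuous.const_smul (g := fun x => L.symm (E.orthogonalProjectionOnto (x - c))) ?_ r⁻¹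
    exact L.symm.continuous.comp ((E.orthogonalProjectionOnto).cont.comp
      (continuous_id.sub continuous_const))
  have hΨΦ : ∀ z, Ψ (Φ z) = z := by
    intro z
    have h1 : Φ z - c = ((r • L z : E) : EuclideanSpace ℝ (Fin d)) := by
      simp only [Φ, add_sub_cancel_left, Submodule.coe_smul]
    simp only [Ψ, h1, Submodule.orthogonalProjectionOnto_mem_subspace_eq_self]
    rw [map_smul, L.symm_apply_apply, smul_smul, inv_mul_cancel₀ hr.ne', one_smul]
  refine ⟨Φ, Ψ, hΦ, hΨ, hΨΦ, ?_⟩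
  rw [hCeq]
  ext x
  constructor
  · rintro ⟨hxP, hxd⟩
    have hv : x - c ∈ E := by
      have := AffineSubspace.vsub_mem_direction hxP hcP
      simpa using this
    set v : E := ⟨x - c, hv⟩ with hvdef
    refine ⟨L.symm (r⁻¹ • v), ?_, ?_⟩
    · rw [mem_SC_iff]
      rw [L.symm.norm_map]
      rw [norm_smul]
      have : ‖v‖ = r := by
        rw [hvdef]
        show ‖x - c‖ = r
        rw [← dist_eq_norm]
        exact hxd
      rw [this, Real.norm_eq_abs, abs_inv, abs_of_pos hr, inv_mul_cancel₀ hr.ne']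
    · show c + r • ((L (L.symm (r⁻¹ • v)) : E) : EuclideanSpace ℝ (Fin d)) = x
      rw [L.apply_symm_apply]
      have : ((r⁻¹ • v : E) : EuclideanSpace ℝ (Fin d)) = r⁻¹ • (x - c) := rfl
      rw [this, smul_smul, mul_inv_cancel₀ hr.ne', one_smul, add_sub_cancel]
  · rintro ⟨z, hz, rfl⟩
    rw [mem_SC_iff] at hz
    constructor
    · show c + r • ((L z : E) : EuclideanSpace ℝ (Fin d)) ∈ P
      have hmem : r • ((L z : E) : EuclideanSpace ℝ (Fin d)) ∈ E := by
        have := (r • L z : E).2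
        simpa using this
      have := AffineSubspace.vadd_mem_of_mem_direction hmem hcP
      simpa [add_comm] using this
    · show dist (c + r • ((L z : E) : EuclideanSpace ℝ (Fin d))) c = r
      rw [dist_eq_norm, add_sub_cancel_left, norm_smul]
      have : ‖((L z : E) : EuclideanSpace ℝ (Fin d))‖ = ‖z‖ := by
        rw [Submodule.norm_coe]
        exact L.norm_map z
      rw [this, hz, Real.norm_eq_abs, abs_of_pos hr, mul_one]


section Ambient

variable {d : ℕ} {C : Set (EuclideanSpace ℝ (Fin d))}

/-- Three arcs on a circle in ℝ^d pairwise meeting exactly at `p`, each nontrivial: impossible. -/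
lemma three_arcs_ambient (hC : IsCircle d C)
    {A1 A2 A3 : Set (EuclideanSpace ℝ (Fin d))} {p x1 x2 x3 : EuclideanSpace ℝ (Fin d)}
    (hA1 : A1 ⊆ C) (hA2 : A2 ⊆ C) (hA3 : A3 ⊆ C)
    (hc1 : IsCompact A1) (hc2 : IsCompact A2) (hc3 : IsCompact A3)
    (hn1 : IsConnected A1) (hn2 : IsConnected A2) (hn3 : IsConnected A3)
    (h12 : A1 ∩ A2 = {p}) (h13 : A1 ∩ A3 = {p}) (h23 : A2 ∩ A3 = {p})
    (hx1 : x1 ∈ A1) (hx1p : x1 ≠ p) (hx2 : x2 ∈ A2) (hx2p : x2 ≠ p)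
    (hx3 : x3 ∈ A3) (hx3p : x3 ≠ p) : False := by
  obtain ⟨Φ, Ψ, hΦ, hΨ, hΨΦ, hCeq⟩ := circle_param hC
  have himg : ∀ {A : Set (EuclideanSpace ℝ (Fin d))}, A ⊆ C → Ψ '' A ⊆ SC := by
    rintro A hA z ⟨x, hx, rfl⟩
    obtain ⟨w, hw, rfl⟩ := hCeq ▸ hA hx
    rw [hΨΦ]; exact hw
  have hinjC : Set.InjOn Ψ C := by
    intro x hx y hy h
    obtain ⟨zx, -, rfl⟩ := hCeq ▸ hx
    obtain ⟨zy, -, rfl⟩ := hCeq ▸ hy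
    rw [hΨΦ, hΨΦ] at h; rw [h]
  have hp : p ∈ C := by
    have : p ∈ A1 ∩ A2 := h12 ▸ rfl
    exact hA1 this.1
  refine three_arcs (p := Ψ p) (himg hA1) (himg hA2) (himg hA3)
    (hc1.image hΨ) (hc2.image hΨ) (hc3.image hΨ)
    (hn1.image _ hΨ.continuousOn) (hn2.image _ hΨ.continuousOn) (hn3.image _ hΨ.continuousOn)
    ?_ ?_ ?_
    (Set.mem_image_of_mem _ hx1) ?_ (Set.mem_image_of_mem _ hx2) ?_
    (Set.mem_image_of_mem _ hx3) ?_
  · rw [← hinjC.image_inter hA1 hA2, h12, Set.image_singleton]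
  · rw [← hinjC.image_inter hA1 hA3, h13, Set.image_singleton]
  · rw [← hinjC.image_inter hA2 hA3, h23, Set.image_singleton]
  · exact fun h => hx1p (hinjC (hA1 hx1) hp h)
  · exact fun h => hx2p (hinjC (hA2 hx2) hp h)
  · exact fun h => hx3p (hinjC (hA3 hx3) hp h)

/-- A cyclic chain of arcs covers the whole circle. -/
lemma cyclic_cover_ambient (hC : IsCircle d C) {n : ℕ} (hn : 3 ≤ n)
    (A : ZMod n → Set (EuclideanSpace ℝ (Fin d))) (p : ZMod n → EuclideanSpace ℝ (Fin d))
    (hsub : ∀ i, A i ⊆ C) (hcpt : ∀ i, IsCompact (A i)) (hconn : ∀ i, IsConnected (A i))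
    (hpinj : Function.Injective p)
    (hmem1 : ∀ i, p i ∈ A i) (hmem2 : ∀ i, p (i + 1) ∈ A i)
    (hadj : ∀ i, A i ∩ A (i + 1) = {p (i + 1)}) :
    (⋃ i, A i) = C := by
  obtain ⟨Φ, Ψ, hΦ, hΨ, hΨΦ, hCeq⟩ := circle_param hC
  have hΦΨ : ∀ x ∈ C, Φ (Ψ x) = x := by
    intro x hx
    obtain ⟨z, -, rfl⟩ := hCeq ▸ hx
    rw [hΨΦ]
  have himg : ∀ {A' : Set (EuclideanSpace ℝ (Fin d))}, A' ⊆ C → Ψ '' A' ⊆ SC := by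
    rintro A' hA z ⟨x, hx, rfl⟩
    obtain ⟨w, hw, rfl⟩ := hCeq ▸ hA hx
    rw [hΨΦ]; exact hw
  have hinjC : Set.InjOn Ψ C := by
    intro x hx y hy h
    rw [← hΦΨ x hx, ← hΦΨ y hy, h]
  have hcover := cyclic_cover hn (fun i => Ψ '' A i) (fun i => Ψ (p i))
    (fun i => himg (hsub i)) (fun i => (hcpt i).image hΨ)
    (fun i => (hconn i).image _ hΨ.continuousOn)
    (fun i j h => hpinj (hinjC (hsub i (hmem1 i)) (hsub j (hmem1 j)) h))
    (fun i => Set.mem_image_of_mem _ (hmem1 i)) (fun i => Set.mem_image_of_mem _ (hmem2 i))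
    (fun i => by rw [← hinjC.image_inter (hsub i) (hsub (i+1)), hadj i, Set.image_singleton])
  have : Φ '' (⋃ i, Ψ '' A i) = Φ '' SC := by rw [hcover]
  rw [Set.image_iUnion] at this
  rw [← hCeq] at this
  have heach : ∀ i, Φ '' (Ψ '' A i) = A i := by
    intro i
    rw [Set.image_image]
    exact (Set.image_congr (fun x hx => hΦΨ x (hsub i hx))).trans (Set.image_id _)
  calc (⋃ i, A i) = ⋃ i, Φ '' (Ψ '' A i) := by simp_rw [heach]
  _ = C := this

/-- An arc with two distinct points is infinite. -/
lemma arc_infinite_ambient (hC : IsCircle d C) {A : Set (EuclideanSpace ℝ (Fin d))}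
    {x y : EuclideanSpace ℝ (Fin d)} (hA : A ⊆ C) (hcpt : IsCompact A) (hconn : IsConnected A)
    (hx : x ∈ A) (hy : y ∈ A) (hxy : x ≠ y) : A.Infinite := by
  obtain ⟨Φ, Ψ, hΦ, hΨ, hΨΦ, hCeq⟩ := circle_param hC
  have hΦΨ : ∀ x ∈ C, Φ (Ψ x) = x := by
    intro x hx
    obtain ⟨z, -, rfl⟩ := hCeq ▸ hx
    rw [hΨΦ]
  have himg : Ψ '' A ⊆ SC := by
    rintro z ⟨w, hw, rfl⟩
    obtain ⟨u, hu, rfl⟩ := hCeq ▸ hA hw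
    rw [hΨΦ]; exact hu
  have hinjC : Set.InjOn Ψ C := fun a ha b hb h => by rw [← hΦΨ a ha, ← hΦΨ b hb, h]
  have hinf : (Ψ '' A).Infinite :=
    arc_infinite himg (hcpt.image hΨ) (hconn.image _ hΨ.continuousOn)
      (Set.mem_image_of_mem _ hx) (Set.mem_image_of_mem _ hy)
      (fun h => hxy (hinjC (hA hx) (hA hy) h))
  exact Set.Infinite.of_image _ hinf

end Ambient


section Walks

open SimpleGraph

lemma getVert_eq_support_getElem {V : Type*} {G' : SimpleGraph V} {a b : V} (p : G'.Walk a b)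
    (i : ℕ) (h : i < p.support.length) : p.getVert i = p.support[i] := by
  induction p generalizing i with
  | nil =>
    have hi : i = 0 := by
      simp only [SimpleGraph.Walk.support_nil, List.length_singleton] at h
      omega
    subst hi
    rfl
  | @cons u v' w' hadj p ih =>
    cases i with
    | zero => rfl
    | succ i =>
      have hstep : (SimpleGraph.Walk.cons hadj p).support[i+1] = p.support[i]'(by
          have := h; simp only [SimpleGraph.Walk.support_cons, List.length_cons] at this; omega) := by
        simp only [SimpleGraph.Walk.support_cons, List.getElem_cons_succ]
      rw [hstep, SimpleGraph.Walk.getVert_cons_succ]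
      exact ih i _

lemma cycle_chain {V : Type*} {G' : SimpleGraph V} {v : V} {c : G'.Walk v v} (hc : c.IsCycle) :
    Function.Injective (fun i : ZMod c.length => c.getVert i.val) ∧
      ∀ i : ZMod c.length, G'.Adj (c.getVert i.val) (c.getVert (i+1).val) := by
  have hn3 : 3 ≤ c.length := hc.three_le_length
  haveI : NeZero c.length := ⟨by omega⟩
  haveI : Fact (1 < c.length) := ⟨by omega⟩
  set n := c.length with hn
  have hsuplen : c.support.length = n + 1 := by rw [SimpleGraph.Walk.length_support]
  have htaillen : c.support.tail.length = n := by
    rw [List.length_tail, hsuplen]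
    omega
  have hkey : ∀ k l : ℕ, 1 ≤ k → k ≤ n → 1 ≤ l → l ≤ n →
      c.getVert k = c.getVert l → k = l := by
    intro k l hk1 hkn hl1 hln h
    have hk' : k - 1 < c.support.tail.length := by omega
    have hl' : l - 1 < c.support.tail.length := by omega
    have e1 : c.support.tail[k-1] = c.getVert k := by
      rw [List.getElem_tail]
      have : k - 1 + 1 = k := by omega
      simp_rw [this]
      exact (getVert_eq_support_getElem c k (by omega)).symm
    have e2 : c.support.tail[l-1] = c.getVert l := by
      rw [List.getElem_tail]
      have : l - 1 + 1 = l := by omega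
      simp_rw [this]
      exact (getVert_eq_support_getElem c l (by omega)).symm
    have : c.support.tail[k-1] = c.support.tail[l-1] := by rw [e1, e2, h]
    have := (hc.support_nodup.getElem_inj_iff).1 this
    omega
  have hg0 : c.getVert n = c.getVert 0 := by
    rw [SimpleGraph.Walk.getVert_zero, hn]
    exact SimpleGraph.Walk.getVert_length c
  constructor
  · intro i j h
    simp only at h
    set ki := if i.val = 0 then n else i.val with hki
    set kj := if j.val = 0 then n else j.val with hkj
    have hgi : c.getVert ki = c.getVert i.val := by
      rw [hki]; split
      · rw [hg0]; congr 1; omega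
      · rfl
    have hgj : c.getVert kj = c.getVert j.val := by
      rw [hkj]; split
      · rw [hg0]; congr 1; omega
      · rfl
    have hiv := ZMod.val_lt i
    have hjv := ZMod.val_lt j
    have hkik : ki = kj := by
      apply hkey ki kj
      · rw [hki]; split <;> omega
      · rw [hki]; split <;> omega
      · rw [hkj]; split <;> omega
      · rw [hkj]; split <;> omega
      · rw [hgi, hgj, h]
    apply ZMod.val_injective
    rw [hki, hkj] at hkik
    split at hkik <;> split at hkik <;> omega
  · intro i
    have hiv : i.val < n := ZMod.val_lt i
    have hone : (1 : ZMod n).val = 1 := ZMod.val_one n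
    rcases Nat.lt_or_ge (i.val + 1) n with hlt | hge
    · have hval : (i + 1).val = i.val + 1 := by
        rw [ZMod.val_add, hone, Nat.mod_eq_of_lt hlt]
      rw [hval]
      exact SimpleGraph.Walk.adj_getVert_succ c (by omega)
    · have hin : i.val = n - 1 := by omega
      have hval : (i + 1).val = 0 := by
        rw [ZMod.val_add, hone, hin]
        have : n - 1 + 1 = n := by omega
        rw [this, Nat.mod_self]
      rw [hval, hin, ← hg0]
      have h1 : n - 1 + 1 = n := by omega
      have h2 := SimpleGraph.Walk.adj_getVert_succ c (i := n - 1) (by omega)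
      rw [h1] at h2
      exact h2

end Walks


section PerCircle

open SimpleGraph

variable {d : ℕ} {V : Type*} [Fintype V] {G : SimpleGraph V} (D : CircularArcDrawing d G)
variable {C : Set (EuclideanSpace ℝ (Fin d))}

/-- Sym2 membership intersection of two edges sharing vertex v -/
lemma common_vertex {u a b : V} (hab : a ≠ b) (ha : a ≠ u) (hb : b ≠ u) :
    {w | w ∈ s(u, a) ∧ w ∈ s(u, b)} = ({u} : Set V) := by
  ext w
  simp only [Sym2.mem_iff, Set.mem_setOf_eq, Set.mem_singleton_iff]
  constructor
  · rintro ⟨h1 | h1, h2 | h2⟩ <;> first | exact h1 | exact h2 | (exfalso; rw [h1] at h2; tauto) |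
      (exfalso; exact hab (h1.symm ▸ h2 ▸ rfl))
  · intro h; exact ⟨Or.inl h, Or.inl h⟩

lemma consecutive_common {x y z : V} (hxy : x ≠ y) (hyz : y ≠ z) (hxz : x ≠ z) :
    {w | w ∈ s(x, y) ∧ w ∈ s(y, z)} = ({y} : Set V) := by
  ext w
  simp only [Sym2.mem_iff, Set.mem_setOf_eq, Set.mem_singleton_iff]
  constructor
  · rintro ⟨h1 | h1, h2 | h2⟩
    · exact absurd (h1.symm.trans h2) hxy
    · exact absurd (h1.symm.trans h2) hxz
    · exact h1
    · exact h1
  · intro h; exact ⟨Or.inr h, Or.inl h⟩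

/-- Max degree 2 for the subgraph of edges drawn on one circle. -/
lemma degree_le_two (hC : IsCircle d C) {E' : Set (Sym2 V)} (hE' : E' ⊆ G.edgeSet)
    (harc : ∀ e ∈ E', D.arc e ⊆ C) (v : V) :
    ((SimpleGraph.fromEdgeSet E').neighborSet v).ncard ≤ 2 := by
  by_contra hcon
  push_neg at hcon
  obtain ⟨u1, hu1, u2, hu2, u3, hu3, h12, h13, h23⟩ :=
    (Set.two_lt_ncard (Set.toFinite _)).1 hcon
  rw [SimpleGraph.mem_neighborSet, SimpleGraph.fromEdgeSet_adj] at hu1 hu2 hu3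
  have hne1 : u1 ≠ v := fun h => hu1.2 h.symm
  have hne2 : u2 ≠ v := fun h => hu2.2 h.symm
  have hne3 : u3 ≠ v := fun h => hu3.2 h.symm
  have he1 : s(v, u1) ∈ G.edgeSet := hE' hu1.1
  have he2 : s(v, u2) ∈ G.edgeSet := hE' hu2.1
  have he3 : s(v, u3) ∈ G.edgeSet := hE' hu3.1
  have hd12 : s(v, u1) ≠ s(v, u2) := fun h => h12 (Sym2.congr_right.1 h)
  have hd13 : s(v, u1) ≠ s(v, u3) := fun h => h13 (Sym2.congr_right.1 h)
  have hd23 : s(v, u2) ≠ s(v, u3) := fun h => h23 (Sym2.congr_right.1 h)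
  obtain ⟨-, -, -, hcpt1, hconn1⟩ := D.arc_isArc _ he1
  obtain ⟨-, -, -, hcpt2, hconn2⟩ := D.arc_isArc _ he2
  obtain ⟨-, -, -, hcpt3, hconn3⟩ := D.arc_isArc _ he3
  have hint12 : D.arc s(v, u1) ∩ D.arc s(v, u2) = {D.pos v} := by
    rw [D.crossFree _ he1 _ he2 hd12, common_vertex h12 hne1 hne2, Set.image_singleton]
  have hint13 : D.arc s(v, u1) ∩ D.arc s(v, u3) = {D.pos v} := by
    rw [D.crossFree _ he1 _ he3 hd13, common_vertex h13 hne1 hne3, Set.image_singleton]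
  have hint23 : D.arc s(v, u2) ∩ D.arc s(v, u3) = {D.pos v} := by
    rw [D.crossFree _ he2 _ he3 hd23, common_vertex h23 hne2 hne3, Set.image_singleton]
  exact three_arcs_ambient hC (harc _ hu1.1) (harc _ hu2.1) (harc _ hu3.1)
    hcpt1 hcpt2 hcpt3 hconn1 hconn2 hconn3 hint12 hint13 hint23
    (D.endpoint_mem _ he1 u1 (Sym2.mem_mk_right v u1)) (fun h => hne1 (D.inj h))
    (D.endpoint_mem _ he2 u2 (Sym2.mem_mk_right v u2)) (fun h => hne2 (D.inj h))
    (D.endpoint_mem _ he3 u3 (Sym2.mem_mk_right v u3)) (fun h => hne3 (D.inj h))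

/-- Deleting any edge from a circle subgraph yields an acyclic graph. -/
lemma delete_acyclic (hC : IsCircle d C) {E' : Set (Sym2 V)} (hE' : E' ⊆ G.edgeSet)
    (harc : ∀ e ∈ E', D.arc e ⊆ C) {e₀ : Sym2 V}
    (he₀ : e₀ ∈ (SimpleGraph.fromEdgeSet E').edgeSet) :
    ((SimpleGraph.fromEdgeSet E').deleteEdges {e₀}).IsAcyclic := by
  intro v c hc
  have hn3 : 3 ≤ c.length := hc.three_le_length
  haveI : NeZero c.length := ⟨by omega⟩
  set n := c.length with hn
  obtain ⟨hWinj, hWadj⟩ := cycle_chain hc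
  set W : ZMod n → V := fun i => c.getVert i.val with hW
  -- edges of the cycle
  have hWne : ∀ i j : ZMod n, i ≠ j → W i ≠ W j := fun i j hij h => hij (hWinj h)
  have h2ne : ∀ i : ZMod n, i ≠ i + 1 := by
    intro i h
    have : (1 : ZMod n) = 0 := by linear_combination -h
    have hdvd := (ZMod.natCast_eq_zero_iff 1 n).1 (by exact_mod_cast this)
    have := Nat.le_of_dvd one_pos hdvd
    omega
  have h2ne' : ∀ i : ZMod n, i ≠ i + 1 + 1 := by
    intro i h
    have : ((2 : ℕ) : ZMod n) = 0 := by push_cast; linear_combination -h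
    have hdvd := (ZMod.natCast_eq_zero_iff 2 n).1 this
    have := Nat.le_of_dvd two_pos hdvd
    omega
  have hadj : ∀ i : ZMod n,
      ((SimpleGraph.fromEdgeSet E').deleteEdges {e₀}).Adj (W i) (W (i + 1)) := hWadj
  have hmemE' : ∀ i : ZMod n, s(W i, W (i + 1)) ∈ E' ∧ s(W i, W (i + 1)) ≠ e₀ := by
    intro i
    have h := (hadj i)
    rw [← SimpleGraph.mem_edgeSet, SimpleGraph.edgeSet_deleteEdges, Set.mem_diff,
      SimpleGraph.edgeSet_fromEdgeSet] at h
    exact ⟨h.1.1, fun hh => h.2 (hh ▸ rfl)⟩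
  have hmemG : ∀ i : ZMod n, s(W i, W (i + 1)) ∈ G.edgeSet := fun i => hE' (hmemE' i).1
  have hWadj_ne : ∀ i : ZMod n, W i ≠ W (i + 1) := fun i => (hadj i).ne
  have hconsec_ne : ∀ i : ZMod n, s(W i, W (i + 1)) ≠ s(W (i + 1), W (i + 1 + 1)) := by
    intro i h
    rw [Sym2.eq_iff] at h
    rcases h with ⟨h1, -⟩ | ⟨h1, h2⟩
    · exact hWadj_ne i h1
    · exact hWne i (i + 1 + 1) (h2ne' i) h1
  -- the chain of arcs covers C
  have hcover : (⋃ i : ZMod n, D.arc s(W i, W (i + 1))) = C := by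
    apply cyclic_cover_ambient hC hn3 _ (fun i => D.pos (W i))
    · exact fun i => harc _ (hmemE' i).1
    · intro i; obtain ⟨-, -, -, hcpt, -⟩ := D.arc_isArc _ (hmemG i); exact hcpt
    · intro i; obtain ⟨-, -, -, -, hconn⟩ := D.arc_isArc _ (hmemG i); exact hconn
    · exact fun i j h => hWinj (D.inj h)
    · exact fun i => D.endpoint_mem _ (hmemG i) _ (Sym2.mem_mk_left _ _)
    · exact fun i => D.endpoint_mem _ (hmemG i) _ (Sym2.mem_mk_right _ _)
    · intro i
      rw [D.crossFree _ (hmemG i) _ (hmemG (i + 1)) (hconsec_ne i),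
        consecutive_common (hWadj_ne i) (hWadj_ne (i + 1))
          (hWne i (i + 1 + 1) (h2ne' i)), Set.image_singleton]
  -- now e₀'s arc must meet the cover in a non-vertex point
  rw [SimpleGraph.edgeSet_fromEdgeSet, Set.mem_diff] at he₀
  obtain ⟨he₀E, he₀diag⟩ := he₀
  have he₀G : e₀ ∈ G.edgeSet := hE' he₀E
  obtain ⟨-, -, -, hcpt₀, hconn₀⟩ := D.arc_isArc _ he₀G
  -- arc of e₀ is infinite
  induction e₀ using Sym2.ind with
  | _ u₀ v₀ =>
  have huv : u₀ ≠ v₀ := fun h => he₀diag (by rw [h]; exact Sym2.mk_isDiag_iff.2 rfl)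
  have hinf : (D.arc s(u₀, v₀)).Infinite := by
    refine arc_infinite_ambient hC (harc _ he₀E) hcpt₀ hconn₀
      (D.endpoint_mem _ he₀G u₀ (Sym2.mem_mk_left _ _))
      (D.endpoint_mem _ he₀G v₀ (Sym2.mem_mk_right _ _))
      (fun h => huv (D.inj h))
  obtain ⟨x, hxarc, hxpos⟩ := (hinf.diff (Set.finite_range D.pos)).nonempty
  have hxC : x ∈ C := harc _ he₀E hxarc
  rw [← hcover] at hxC
  obtain ⟨i, hxi⟩ := Set.mem_iUnion.1 hxC
  have hxx : x ∈ D.arc s(W i, W (i + 1)) ∩ D.arc s(u₀, v₀) := ⟨hxi, hxarc⟩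
  rw [D.crossFree _ (hmemG i) _ he₀G (hmemE' i).2] at hxx
  obtain ⟨w, -, hw⟩ := hxx
  exact hxpos ⟨w, hw⟩

end PerCircle


section TwoEdge

open SimpleGraph

variable {V : Type*} [Fintype V]

lemma twoEdge_acyclic {s : Set (Sym2 V)} {e1 e2 : Sym2 V} (hs : s ⊆ {e1, e2}) :
    (SimpleGraph.fromEdgeSet s).IsAcyclic := by
  classical
  intro v c hc
  have hlen : 3 ≤ c.length := hc.three_le_length
  have hnodup : c.edges.Nodup := hc.edges_nodup
  have hsub : ∀ e ∈ c.edges, e ∈ ({e1, e2} : Finset (Sym2 V)) := by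
    intro e he
    have := c.edges_subset_edgeSet he
    rw [SimpleGraph.edgeSet_fromEdgeSet] at this
    rcases hs this.1 with h | h
    · simp [h]
    · simp only [Set.mem_singleton_iff] at h
      simp [h]
  have hcard : c.edges.toFinset.card = c.edges.length := List.toFinset_card_of_nodup hnodup
  have hsubset : c.edges.toFinset ⊆ ({e1, e2} : Finset (Sym2 V)) := by
    intro e he
    exact hsub e (List.mem_toFinset.1 he)
  have h2 := Finset.card_le_card hsubset
  have hpair : ({e1, e2} : Finset (Sym2 V)).card ≤ 2 := Finset.card_insert_le _ _ |>.trans (by simp)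
  rw [hcard, SimpleGraph.Walk.length_edges] at h2
  omega

lemma twoEdge_degree {s : Set (Sym2 V)} {e1 e2 : Sym2 V} (hs : s ⊆ {e1, e2}) (v : V) :
    ((SimpleGraph.fromEdgeSet s).neighborSet v).ncard ≤ 2 := by
  have hsub : (SimpleGraph.fromEdgeSet s).neighborSet v ⊆
      {u | s(v, u) = e1} ∪ {u | s(v, u) = e2} := by
    intro u hu
    rw [SimpleGraph.mem_neighborSet, SimpleGraph.fromEdgeSet_adj] at hu
    rcases hs hu.1 with h | h
    · exact Or.inl h
    · exact Or.inr h
  have hss : ∀ e : Sym2 V, ({u | s(v, u) = e} : Set V).Subsingleton := by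
    intro e a ha b hb
    exact Sym2.congr_right.1 ((ha : s(v,a) = e).trans (hb : s(v,b) = e).symm)
  have h1 : ({u | s(v, u) = e1} : Set V).ncard ≤ 1 := by
    rcases (hss e1).eq_empty_or_singleton with h | ⟨x, h⟩
    · rw [h]; simp
    · rw [h]; simp
  have h2 : ({u | s(v, u) = e2} : Set V).ncard ≤ 1 := by
    rcases (hss e2).eq_empty_or_singleton with h | ⟨x, h⟩
    · rw [h]; simp
    · rw [h]; simp
  calc ((SimpleGraph.fromEdgeSet s).neighborSet v).ncard
      ≤ ({u | s(v, u) = e1} ∪ {u | s(v, u) = e2} : Set V).ncard :=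
        Set.ncard_le_ncard hsub (Set.toFinite _)
  _ ≤ ({u | s(v, u) = e1} : Set V).ncard + ({u | s(v, u) = e2} : Set V).ncard :=
        Set.ncard_union_le _ _
  _ ≤ 2 := by omega

end TwoEdge


end CircleCover


open CircleCover

/-- If a finite simple graph `G` admits a crossing-free circular-arc drawing in `ℝ^d`
(`d ≥ 2`) covered by a family of `r` circles, then the linear arboricity of `G` is at most
`⌈3r/2⌉ = r + ⌈r/2⌉`: the edge set of `G` can be partitioned into at most `r + ⌈r/2⌉`
linear forests (acyclic subgraphs of maximum degree at most 2). -/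
theorem linearArboricity_le_of_circle_cover {d : ℕ} (hd : 2 ≤ d) {V : Type*} [Fintype V]
    (G : SimpleGraph V) (D : CircularArcDrawing d G)
    (𝒞 : Finset (Set (EuclideanSpace ℝ (Fin d))))
    (hcirc : ∀ C ∈ 𝒞, IsCircle d C) (hcov : D.CoveredBy 𝒞)
    (r : ℕ) (hr : 𝒞.card = r) :
    ∃ (N : ℕ) (H : Fin N → SimpleGraph V),
      N ≤ r + (r + 1) / 2 ∧
      (∀ i, H i ≤ G) ∧
      (∀ i, (H i).IsAcyclic) ∧
      (∀ i v, ((H i).neighborSet v).ncard ≤ 2) ∧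
      (∀ e ∈ G.edgeSet, ∃! i, e ∈ (H i).edgeSet) := by
  classical
  rcases Nat.eq_zero_or_pos r with hr0 | hrpos
  · subst hr0
    refine ⟨0, fun i => i.elim0, Nat.zero_le _, fun i => i.elim0, fun i => i.elim0,
      fun i => i.elim0, fun e he => ?_⟩
    exfalso
    obtain ⟨C, hC, -⟩ := hcov e he
    have : 0 < 𝒞.card := Finset.card_pos.2 ⟨C, hC⟩
    omega
  have eqv : {x // x ∈ 𝒞} ≃ Fin r := Fintype.equivFinOfCardEq (by rw [Fintype.card_coe, hr])
  have hcol : ∀ e, e ∈ G.edgeSet → ∃ C : {x // x ∈ 𝒞}, D.arc e ⊆ C.1 := by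
    intro e he
    obtain ⟨C, hC, hsub⟩ := hcov e he
    exact ⟨⟨C, hC⟩, hsub⟩
  choose colF hcolF using hcol
  set col : Sym2 V → Fin r := fun e => if he : e ∈ G.edgeSet then eqv (colF e he) else ⟨0, hrpos⟩
    with hcoldef
  set circ : Fin r → Set (EuclideanSpace ℝ (Fin d)) := fun i => (eqv.symm i).1 with hcircdef
  have hcircIs : ∀ i, IsCircle d (circ i) := fun i => hcirc _ (eqv.symm i).2
  have harc : ∀ e, e ∈ G.edgeSet → D.arc e ⊆ circ (col e) := by
    intro e he
    simp only [hcoldef, hcircdef, dif_pos he, Equiv.symm_apply_apply]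
    exact hcolF e he
  set E : Fin r → Set (Sym2 V) := fun i => {e | e ∈ G.edgeSet ∧ col e = i} with hEdef
  have hEsub : ∀ i, E i ⊆ G.edgeSet := fun i e he => he.1
  have hEarc : ∀ i, ∀ e ∈ E i, D.arc e ⊆ circ i := fun i e he => he.2 ▸ harc e he.1
  set GC : Fin r → SimpleGraph V := fun i => SimpleGraph.fromEdgeSet (E i) with hGCdef
  set rem : Fin r → Set (Sym2 V) := fun i =>
    if h : (GC i).edgeSet.Nonempty then {h.choose} else ∅ with hremdef
  have hremsub : ∀ i, rem i ⊆ (GC i).edgeSet := by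
    intro i e he
    simp only [hremdef] at he
    by_cases h : (GC i).edgeSet.Nonempty
    · simp only [dif_pos h, Set.mem_singleton_iff] at he
      exact he ▸ h.choose_spec
    · simp only [dif_neg h] at he
      exact absurd he (Set.notMem_empty e)
  have hremE : ∀ i, rem i ⊆ E i := by
    intro i e he
    have h := hremsub i he
    simp only [hGCdef, SimpleGraph.edgeSet_fromEdgeSet] at h
    exact h.1
  set HC : Fin r → SimpleGraph V := fun i => (GC i).deleteEdges (rem i) with hHCdef
  have hGCle : ∀ i, GC i ≤ G := by
    intro i a b hab
    simp only [hGCdef, SimpleGraph.fromEdgeSet_adj, hEdef, Set.mem_setOf_eq] at hab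
    exact hab.1.1
  have hHCle : ∀ i, HC i ≤ G := by
    intro i
    refine le_trans ?_ (hGCle i)
    simp only [hHCdef]
    exact SimpleGraph.deleteEdges_le _
  have hHCacyc : ∀ i, (HC i).IsAcyclic := by
    intro i
    by_cases h : (GC i).edgeSet.Nonempty
    · have hre : rem i = {h.choose} := by simp only [hremdef, dif_pos h]
      have he₀ : h.choose ∈ (SimpleGraph.fromEdgeSet (E i)).edgeSet := by
        have := h.choose_spec
        simpa only [hGCdef] using this
      simp only [hHCdef, hre, hGCdef]
      exact delete_acyclic D (hcircIs i) (hEsub i) (hEarc i) he₀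
    · have hre : rem i = ∅ := by simp only [hremdef, dif_neg h]
      simp only [hHCdef, hre, SimpleGraph.deleteEdges_empty]
      intro v c hc
      apply h
      have h0 : 0 < c.length := by have := hc.three_le_length; omega
      exact ⟨s(c.getVert 0, c.getVert 1), SimpleGraph.Walk.adj_getVert_succ c h0⟩
  have hHCdeg : ∀ i v, ((HC i).neighborSet v).ncard ≤ 2 := by
    intro i v
    have hsub : (HC i).neighborSet v ⊆ (GC i).neighborSet v := by
      intro u hu
      simp only [hHCdef, SimpleGraph.mem_neighborSet, SimpleGraph.deleteEdges_adj] at hu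
      exact hu.1
    refine le_trans (Set.ncard_le_ncard hsub (Set.toFinite _)) ?_
    have := degree_le_two D (hcircIs i) (hEsub i) (hEarc i) v
    simpa only [hGCdef] using this
  set rem' : ℕ → Set (Sym2 V) := fun k => if h : k < r then rem ⟨k, h⟩ else ∅ with hrem'def
  have hrem'shape : ∀ k, rem' k = ∅ ∨ ∃ x, rem' k = {x} := by
    intro k
    simp only [hrem'def]
    by_cases h : k < r
    · simp only [dif_pos h, hremdef]
      by_cases h2 : (GC ⟨k, h⟩).edgeSet.Nonempty
      · exact Or.inr ⟨_, by rw [dif_pos h2]⟩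
      · exact Or.inl (by rw [dif_neg h2])
    · exact Or.inl (by rw [dif_neg h])
  set PG : ℕ → SimpleGraph V := fun j => SimpleGraph.fromEdgeSet (rem' (2*j) ∪ rem' (2*j+1))
    with hPGdef
  have hPGprops : ∀ j, (PG j).IsAcyclic ∧ (∀ v, ((PG j).neighborSet v).ncard ≤ 2) := by
    intro j
    have hbot : ∀ s : Set (Sym2 V), s = ∅ →
        (SimpleGraph.fromEdgeSet s).IsAcyclic ∧
          (∀ v, ((SimpleGraph.fromEdgeSet s).neighborSet v).ncard ≤ 2) := by
      intro s hs
      subst hs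
      rw [SimpleGraph.fromEdgeSet_empty]
      constructor
      · intro v c hc; exact hc.ne_bot rfl
      · intro v
        have : (⊥ : SimpleGraph V).neighborSet v = ∅ := by
          ext u; simp [SimpleGraph.mem_neighborSet]
        rw [this]; simp
    rcases hrem'shape (2*j) with h1 | ⟨x1, h1⟩ <;> rcases hrem'shape (2*j+1) with h2 | ⟨x2, h2⟩
    · simp only [hPGdef]
      exact hbot _ (by rw [h1, h2, Set.empty_union])
    · have hsub : rem' (2*j) ∪ rem' (2*j+1) ⊆ {x2, x2} := by
        rw [h1, h2, Set.empty_union]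
        intro a ha; exact Or.inl ha
      simp only [hPGdef]
      exact ⟨twoEdge_acyclic hsub, fun v => twoEdge_degree hsub v⟩
    · have hsub : rem' (2*j) ∪ rem' (2*j+1) ⊆ {x1, x1} := by
        rw [h1, h2, Set.union_empty]
        intro a ha; exact Or.inl ha
      simp only [hPGdef]
      exact ⟨twoEdge_acyclic hsub, fun v => twoEdge_degree hsub v⟩
    · have hsub : rem' (2*j) ∪ rem' (2*j+1) ⊆ {x1, x2} := by
        rw [h1, h2]
        rintro a (ha | ha)
        · exact Or.inl ha
        · exact Or.inr ha
      simp only [hPGdef]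
      exact ⟨twoEdge_acyclic hsub, fun v => twoEdge_degree hsub v⟩
  have hPGle : ∀ j, PG j ≤ G := by
    intro j a b hab
    simp only [hPGdef, SimpleGraph.fromEdgeSet_adj] at hab
    obtain ⟨hmem, -⟩ := hab
    have hEmem : s(a,b) ∈ G.edgeSet := by
      rcases hmem with h | h <;>
      · simp only [hrem'def] at h
        split at h
        · exact hEsub _ (hremE _ h)
        · exact absurd h (Set.notMem_empty _)
    exact hEmem
  set N := r + (r+1)/2 with hNdef
  set Hfun : Fin N → SimpleGraph V := fun k =>
    if h : (k : ℕ) < r then HC ⟨k, h⟩ else PG ((k : ℕ) - r) with hHdef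
  refine ⟨N, Hfun, le_refl _, ?_, ?_, ?_, ?_⟩
  · intro k
    simp only [hHdef]
    split
    · exact hHCle _
    · exact hPGle _
  · intro k
    simp only [hHdef]
    split
    · exact hHCacyc _
    · exact (hPGprops _).1
  · intro k v
    simp only [hHdef]
    split
    · exact hHCdeg _ v
    · exact (hPGprops _).2 v
  · intro e he
    set i₀ := col e with hi0
    have heE : e ∈ E i₀ := ⟨he, rfl⟩
    have hdiag : ¬ e.IsDiag := G.not_isDiag_of_mem_edgeSet he
    have heGC : e ∈ (GC i₀).edgeSet := by
      simp only [hGCdef, SimpleGraph.edgeSet_fromEdgeSet]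
      exact ⟨heE, hdiag⟩
    have hmemHC : ∀ (i : Fin r), e ∈ (HC i).edgeSet ↔ (i = i₀ ∧ e ∉ rem i) := by
      intro i
      simp only [hHCdef, SimpleGraph.edgeSet_deleteEdges, Set.mem_diff]
      constructor
      · rintro ⟨hGCe, hnrem⟩
        have hEi : e ∈ E i := by
          simp only [hGCdef, SimpleGraph.edgeSet_fromEdgeSet] at hGCe
          exact hGCe.1
        have hieq : i = i₀ := by rw [hi0]; exact hEi.2.symm
        exact ⟨hieq, hnrem⟩
      · rintro ⟨heq, hnrem⟩
        rw [heq]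
        rw [heq] at hnrem
        exact ⟨heGC, hnrem⟩
    have hmemrem : ∀ (m : ℕ), e ∈ rem' m ↔ (m = (i₀ : ℕ) ∧ e ∈ rem i₀) := by
      intro m
      simp only [hrem'def]
      constructor
      · intro h
        by_cases hm : m < r
        · rw [dif_pos hm] at h
          have hEm : e ∈ E ⟨m, hm⟩ := hremE _ h
          have hfin : (⟨m, hm⟩ : Fin r) = i₀ := by rw [hi0]; exact hEm.2.symm
          refine ⟨?_, ?_⟩
          · exact congrArg Fin.val hfin
          · rw [← hfin]; exact h
        · rw [dif_neg hm] at h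
          exact absurd h (Set.notMem_empty _)
      · rintro ⟨rfl, hremm⟩
        rw [dif_pos i₀.2]
        simpa only [Fin.eta] using hremm
    by_cases hcase : e ∈ rem i₀
    · have hj : (i₀ : ℕ)/2 < (r+1)/2 := by have := i₀.2; omega
      have hkN : r + (i₀ : ℕ)/2 < N := by rw [hNdef]; omega
      refine ⟨⟨r + (i₀ : ℕ)/2, hkN⟩, ?_, ?_⟩
      · simp only [hHdef]
        rw [dif_neg (by show ¬ (r + (i₀ : ℕ)/2 < r); omega)]
        show e ∈ (PG (r + (i₀ : ℕ)/2 - r)).edgeSet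
        have hsub' : r + (i₀ : ℕ)/2 - r = (i₀ : ℕ)/2 := by omega
        rw [hsub']
        simp only [hPGdef, SimpleGraph.edgeSet_fromEdgeSet]
        refine ⟨?_, hdiag⟩
        have hpar : 2*((i₀:ℕ)/2) = (i₀:ℕ) ∨ 2*((i₀:ℕ)/2)+1 = (i₀:ℕ) := by omega
        rcases hpar with h | h
        · exact Or.inl ((hmemrem _).2 ⟨h, hcase⟩)
        · exact Or.inr ((hmemrem _).2 ⟨h, hcase⟩)
      · intro k hk
        simp only [hHdef] at hk
        split at hk
        next hlt =>
          exfalso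
          have := (hmemHC _).1 hk
          rw [this.1] at this
          exact this.2 hcase
        next hlt =>
          simp only [hPGdef, SimpleGraph.edgeSet_fromEdgeSet] at hk
          obtain ⟨hmem, -⟩ := hk
          have hind : 2*((k:ℕ)-r) = (i₀:ℕ) ∨ 2*((k:ℕ)-r)+1 = (i₀:ℕ) := by
            rcases hmem with h | h
            · exact Or.inl ((hmemrem _).1 h).1
            · exact Or.inr ((hmemrem _).1 h).1
          apply Fin.ext
          show (k:ℕ) = r + (i₀:ℕ)/2
          have hkN2 : (k:ℕ) < r + (r+1)/2 := lt_of_lt_of_le k.2 hNdef.le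
          omega
    · have hi0r : (i₀ : ℕ) < N := by rw [hNdef]; have := i₀.2; omega
      refine ⟨⟨(i₀:ℕ), hi0r⟩, ?_, ?_⟩
      · simp only [hHdef]
        rw [dif_pos (show ((i₀:ℕ) : ℕ) < r from i₀.2)]
        have hfin : (⟨(i₀:ℕ), i₀.2⟩ : Fin r) = i₀ := Fin.eta i₀ i₀.2
        rw [hfin]
        exact (hmemHC i₀).2 ⟨rfl, hcase⟩
      · intro k hk
        simp only [hHdef] at hk
        split at hk
        next hlt =>
          have := (hmemHC ⟨(k:ℕ), hlt⟩).1 hk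
          apply Fin.ext
          show (k:ℕ) = (i₀:ℕ)
          exact congrArg Fin.val this.1
        next hlt =>
          exfalso
          simp only [hPGdef, SimpleGraph.edgeSet_fromEdgeSet] at hk
          rcases hk.1 with h | h
          · exact hcase ((hmemrem _).1 h).2
          · exact hcase ((hmemrem _).1 h).2
end
end

section
/- Let G be a finite simple graph with a crossing-free circular-arc drawing in ℝ² covered by a family of r circles, and suppose there are k cycles C₁, …, C_k in G whose drawings are nested: writing J_i ⊆ ℝ² for the union of the arcs of the edges of C_i, for each i ∈ {1, …, k−1} the set J_{i+1} is contained in a bounded connected component of ℝ² \ J_i. Then r ≥ k. -/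
open Set

noncomputable section

local notation "E2" => EuclideanSpace ℝ (Fin 2)

lemma line_sphere_subset_pair (p e c : E2) (he : e ≠ 0) (r : ℝ) :
    ∃ a b : ℝ, {t : ℝ | dist (p + t • e) c = r} ⊆ {a, b} := by
  have hA0 : ‖e‖ ≠ 0 := norm_ne_zero_iff.mpr he
  have hA : (0:ℝ) < ‖e‖^2 := by positivity
  set q : E2 := p - c with hq
  set A : ℝ := ‖e‖^2 with hAdef
  set B : ℝ := 2 * (inner ℝ q e : ℝ) with hB
  set disc : ℝ := B^2 - 4*A*(‖q‖^2 - r^2) with hdisc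
  refine ⟨(-B + Real.sqrt disc)/(2*A), (-B - Real.sqrt disc)/(2*A), ?_⟩
  intro t ht
  simp only [mem_setOf_eq] at ht
  have h1 : ‖q + t • e‖^2 = r^2 := by
    have hd : dist (p + t • e) c = ‖q + t • e‖ := by
      rw [dist_eq_norm]; congr 1; rw [hq]; abel
    rw [hd] at ht; rw [ht]
  have h2 : ‖q + t • e‖^2 = A * t^2 + B * t + ‖q‖^2 := by
    rw [norm_add_sq_real, inner_smul_right, norm_smul, Real.norm_eq_abs, mul_pow, sq_abs]
    ring
  have heq : A * t^2 + B * t + (‖q‖^2 - r^2) = 0 := by linarith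
  have key : (2*A*t + B)^2 = disc := by rw [hdisc]; linear_combination 4*A*heq
  have hD : 0 ≤ disc := key ▸ sq_nonneg _
  have h3 : (2*A*t + B)^2 = (Real.sqrt disc)^2 := by rw [Real.sq_sqrt hD, key]
  have h4 : 2*A*t + B = Real.sqrt disc ∨ 2*A*t + B = -Real.sqrt disc :=
    sq_eq_sq_iff_eq_or_eq_neg.mp h3
  have hA' : (2*A) ≠ 0 := by positivity
  rcases h4 with h | h
  · left; field_simp; linarith
  · right; rw [mem_singleton_iff, eq_div_iff hA']; linarith

lemma subset_cci {X : Type*} [TopologicalSpace X] {F T : Set X} (x : X)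
    (hT : IsPreconnected T) (hTF : T ⊆ F)
    (hne : (T ∩ connectedComponentIn F x).Nonempty) : T ⊆ connectedComponentIn F x := by
  obtain ⟨z, hzT, hzU⟩ := hne
  have h1 : T ⊆ connectedComponentIn F z := hT.subset_connectedComponentIn hzT hTF
  rwa [← connectedComponentIn_eq hzU] at h1

lemma frontier_cci {X : Type*} [TopologicalSpace X] [LocallyConnectedSpace X]
    {J : Set X} (hJ : IsClosed J) (x : X) :
    frontier (connectedComponentIn Jᶜ x) ⊆ J := by
  intro p hp
  by_contra hpJ
  set U := connectedComponentIn Jᶜ x with hU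
  have hUo : IsOpen U := hJ.isOpen_compl.connectedComponentIn
  have hpU' : p ∈ connectedComponentIn Jᶜ p := mem_connectedComponentIn hpJ
  have hop : IsOpen (connectedComponentIn Jᶜ p) := hJ.isOpen_compl.connectedComponentIn
  have hpcl : p ∈ closure U := hp.1
  obtain ⟨z, hz1, hz2⟩ := mem_closure_iff.mp hpcl _ hop hpU'
  have heq : U = connectedComponentIn Jᶜ p := by
    rw [hU, connectedComponentIn_eq hz2, ← connectedComponentIn_eq hz1]
  have hpmem : p ∈ U := heq ▸ hpU'
  rw [frontier, hUo.interior_eq] at hp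
  exact hp.2 hpmem

lemma univ_not_bounded : ¬ Bornology.IsBounded (univ : Set E2) := by
  intro h
  obtain ⟨M, hM⟩ := isBounded_iff_forall_norm_le.mp h
  have h1 := hM ((|M| + 1) • EuclideanSpace.single (0 : Fin 2) (1:ℝ)) (mem_univ _)
  rw [norm_smul, EuclideanSpace.norm_single] at h1
  simp [Real.norm_eq_abs, abs_of_nonneg (by positivity : (0:ℝ) ≤ |M| + 1)] at h1
  have := abs_nonneg M
  have := le_abs_self M
  linarith

lemma ray_hits_frontier {U : Set E2} (hUo : IsOpen U)
    (hb : Bornology.IsBounded U) {p d : E2} (hd : d ≠ 0) (hp : p ∈ U) :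
    ∃ t : ℝ, 0 < t ∧ p + t • d ∈ frontier U := by
  by_contra hcon
  push_neg at hcon
  set R : Set E2 := (fun t : ℝ => p + t • d) '' Ici 0 with hR
  have hRconn : IsPreconnected R :=
    (isPreconnected_Ici).image _ (Continuous.continuousOn (by continuity))
  have hRsub : R ⊆ U ∪ (closure U)ᶜ := by
    rintro _ ⟨t, ht, rfl⟩
    rcases eq_or_lt_of_le (mem_Ici.mp ht) with rfl | hlt
    · left; simpa using hp
    · by_cases hcl : p + t • d ∈ closure U
      · left
        have hfr := hcon t hlt
        rw [frontier, hUo.interior_eq] at hfr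
        by_contra hnot
        exact hfr ⟨hcl, hnot⟩
      · right; exact hcl
  have hU1 : (R ∩ U).Nonempty := ⟨p, ⟨0, self_mem_Ici, by simp⟩, hp⟩
  have hU2 : (R ∩ (closure U)ᶜ).Nonempty := by
    obtain ⟨M, hM⟩ := isBounded_iff_forall_norm_le.mp hb.closure
    have hdn : (0:ℝ) < ‖d‖ := norm_pos_iff.mpr hd
    set t0 : ℝ := (|M| + ‖p‖ + 1)/‖d‖ with ht0
    have ht0pos : 0 < t0 := by positivity
    refine ⟨p + t0 • d, ⟨t0, le_of_lt ht0pos, rfl⟩, fun hmem => ?_⟩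
    have h1 := hM _ hmem
    have h2 : ‖t0 • d‖ ≤ ‖p + t0 • d‖ + ‖p‖ := by
      calc ‖t0 • d‖ = ‖(p + t0 • d) - p‖ := by congr 1; abel
      _ ≤ ‖p + t0 • d‖ + ‖p‖ := norm_sub_le _ _
    rw [norm_smul, Real.norm_eq_abs, abs_of_pos ht0pos, ht0] at h2
    rw [div_mul_cancel₀ _ (ne_of_gt hdn)] at h2
    have := le_abs_self M
    linarith
  obtain ⟨z, _, hz1, hz2⟩ := hRconn U (closure U)ᶜ hUo isClosed_closure.isOpen_compl hRsub hU1 hU2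
  exact hz2 (subset_closure hz1)

lemma walk_arcs_isConnected {V : Type*} {G : SimpleGraph V} (D : CircularArcDrawing 2 G) :
    ∀ {u w : V} (p : G.Walk u w), p.edges ≠ [] →
      IsConnected (⋃ e ∈ p.edges, D.arc e) ∧ D.pos u ∈ (⋃ e ∈ p.edges, D.arc e) := by
  intro u w p
  induction p with
  | nil => intro h; simp at h
  | @cons a b w' hadj q ih =>
    intro _
    have he : s(a, b) ∈ G.edgeSet := hadj
    have hsplit : (⋃ e ∈ (SimpleGraph.Walk.cons hadj q).edges, D.arc e)
        = D.arc s(a,b) ∪ ⋃ e ∈ q.edges, D.arc e := by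
      simp [SimpleGraph.Walk.edges_cons, List.mem_cons, Set.iUnion_or, Set.iUnion_union_distrib]
    obtain ⟨C, _, _, hcpt, hconn⟩ := D.arc_isArc _ he
    have hu : D.pos a ∈ D.arc s(a,b) := D.endpoint_mem _ he a (Sym2.mem_mk_left a b)
    have hb : D.pos b ∈ D.arc s(a,b) := D.endpoint_mem _ he b (Sym2.mem_mk_right a b)
    rcases eq_or_ne q.edges [] with hq | hq
    · rw [hsplit, hq]
      simp only [List.not_mem_nil, Set.iUnion_of_empty, Set.iUnion_empty, Set.union_empty]
      exact ⟨hconn, hu⟩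
    · obtain ⟨ihc, ihm⟩ := ih hq
      rw [hsplit]
      refine ⟨IsConnected.union ⟨D.pos b, hb, ihm⟩ hconn ihc, Or.inl hu⟩

/-- A crossing-free circular-arc drawing in `ℝ²` of a graph containing `k` nested cycles
cannot be covered by fewer than `k` circles.  Here the cycles `c 0, …, c (k-1)` are nested
in the sense that, writing `J i` for the union of the arcs of the edges of the `i`-th
cycle, the set `J (i+1)` is contained in a bounded connected component of the complement
of `J i`. -/
theorem nested_cycles_circle_cover_lower_bound {V : Type*} [Fintype V] (G : SimpleGraph V)
    (D : CircularArcDrawing 2 G) (𝒞 : Finset (Set (EuclideanSpace ℝ (Fin 2))))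
    (hcirc : ∀ C ∈ 𝒞, IsCircle 2 C) (hcov : D.CoveredBy 𝒞)
    (k : ℕ) (v : Fin k → V) (c : ∀ i : Fin k, G.Walk (v i) (v i))
    (hc : ∀ i, (c i).IsCycle)
    (J : Fin k → Set (EuclideanSpace ℝ (Fin 2)))
    (hJ : ∀ i, J i = ⋃ e ∈ (c i).edges, D.arc e)
    (hnested : ∀ (i : ℕ) (h : i + 1 < k),
      ∃ x ∉ J ⟨i, by omega⟩,
        J ⟨i + 1, h⟩ ⊆ connectedComponentIn (J ⟨i, by omega⟩)ᶜ x ∧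
        Bornology.IsBounded (connectedComponentIn (J ⟨i, by omega⟩)ᶜ x)) :
    k ≤ 𝒞.card := by
  classical
  rcases Nat.eq_zero_or_pos k with hk0 | hk1
  · omega
  -- basic facts about the J i
  have hedge : ∀ i : Fin k, ∀ e ∈ (c i).edges, e ∈ G.edgeSet :=
    fun i e he => (c i).edges_subset_edgeSet he
  have hcompact : ∀ i : Fin k, IsCompact (J i) := by
    intro i; rw [hJ i]
    exact ((c i).edges.finite_toSet).isCompact_biUnion
      (fun e he => (D.arc_isArc e (hedge i e he)).choose_spec.2.2.1)
  have hclosed : ∀ i, IsClosed (J i) := fun i => (hcompact i).isClosed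
  have hconn : ∀ i, IsConnected (J i) := by
    intro i; rw [hJ i]
    refine (walk_arcs_isConnected D (c i) ?_).1
    have h3 := (hc i).three_le_length
    intro hnil
    rw [← SimpleGraph.Walk.length_edges, hnil] at h3
    simp at h3
  have hJne : ∀ i, (J i).Nonempty := fun i => (hconn i).nonempty
  have hJcirc : ∀ i : Fin k, ∀ y ∈ J i, ∃ C ∈ 𝒞, y ∈ C := by
    intro i y hy
    rw [hJ i] at hy
    simp only [mem_iUnion] at hy
    obtain ⟨e, he, hye⟩ := hy
    obtain ⟨C, hC, hsub⟩ := hcov e (hedge i e he)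
    exact ⟨C, hC, hsub hye⟩
  -- the nested components
  choose x hx1 hx2 hx3 using hnested
  set U : ∀ i : ℕ, i + 1 < k → Set (EuclideanSpace ℝ (Fin 2)) :=
    fun i h => connectedComponentIn (J ⟨i, by omega⟩)ᶜ (x i h) with hUdef
  have hUopen : ∀ (i : ℕ) (h : i + 1 < k), IsOpen (U i h) :=
    fun i h => (hclosed _).isOpen_compl.connectedComponentIn
  have hUbd : ∀ (i : ℕ) (h : i + 1 < k), Bornology.IsBounded (U i h) := hx3
  have hUJ : ∀ (i : ℕ) (h : i + 1 < k), J ⟨i + 1, h⟩ ⊆ U i h := hx2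
  have hUdisj : ∀ (i : ℕ) (h : i + 1 < k), U i h ⊆ (J ⟨i, by omega⟩)ᶜ :=
    fun i h => connectedComponentIn_subset _ _
  have hUfr : ∀ (i : ℕ) (h : i + 1 < k), frontier (U i h) ⊆ J ⟨i, by omega⟩ :=
    fun i h => frontier_cci (hclosed _) _
  have hUpre : ∀ (i : ℕ) (h : i + 1 < k), IsPreconnected (U i h) :=
    fun i h => isPreconnected_connectedComponentIn
  -- consecutive containment of the nested regions
  have hUU : ∀ (i : ℕ) (h2 : i + 1 + 1 < k), U (i+1) h2 ⊆ U i (by omega) := by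
    intro i h2
    have h1 : i + 1 < k := by omega
    have hfrW : frontier (U (i+1) h2) ⊆ J ⟨i+1, h1⟩ := hUfr (i+1) h2
    have hfrWU : frontier (U (i+1) h2) ⊆ U i h1 := fun y hy => hUJ i h1 (hfrW hy)
    have hWne : (U (i+1) h2).Nonempty := (hJne ⟨i+2, h2⟩).mono (hUJ (i+1) h2)
    have hfrne : (frontier (U (i+1) h2)).Nonempty := by
      by_contra hemp
      rw [not_nonempty_iff_eq_empty] at hemp
      have hcl : IsClosed (U (i+1) h2) := by
        apply isClosed_of_closure_subset
        rw [closure_eq_self_union_frontier, hemp, union_empty]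
      have huniv : U (i+1) h2 = univ :=
        IsClopen.eq_univ ⟨hcl, hUopen (i+1) h2⟩ hWne
      exact univ_not_bounded (huniv ▸ hUbd (i+1) h2)
    obtain ⟨y, hy⟩ := hfrne
    have hmeet : ((closure (U (i+1) h2)) ∩ U i h1).Nonempty :=
      ⟨y, frontier_subset_closure hy, hfrWU hy⟩
    by_cases hsep : (closure (U (i+1) h2) ∩ J ⟨i, by omega⟩).Nonempty
    · -- the outer curve J i would meet the closure of the inner region : contradiction
      exfalso
      obtain ⟨z, hz1, hz2⟩ := hsep
      have hzW : z ∈ U (i+1) h2 := by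
        have hz1' : z ∈ U (i+1) h2 ∪ frontier (U (i+1) h2) := by
          rw [← closure_eq_self_union_frontier]; exact hz1
        rcases hz1' with h | h
        · exact h
        · exact absurd hz2 (hUdisj i h1 (hfrWU h))
      -- J i is connected, disjoint from J (i+1), and meets U (i+1), hence J i ⊆ U (i+1)
      have hJJ : (J ⟨i, by omega⟩ : Set (EuclideanSpace ℝ (Fin 2))) ⊆ (J ⟨i+1, h1⟩)ᶜ := by
        intro y hyi hyi1
        exact (hUdisj i h1 (hUJ i h1 hyi1)) hyi
      have hJiW : (J ⟨i, by omega⟩ : Set (EuclideanSpace ℝ (Fin 2))) ⊆ U (i+1) h2 :=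
        subset_cci _ (hconn _).isPreconnected hJJ ⟨z, hz2, hzW⟩
      -- then U i ∪ U (i+1) is clopen, nonempty and bounded : contradiction
      have hAop : IsOpen (U i h1 ∪ U (i+1) h2) := (hUopen i h1).union (hUopen (i+1) h2)
      have hAcl : IsClosed (U i h1 ∪ U (i+1) h2) := by
        apply isClosed_of_closure_subset
        rw [closure_union]
        apply union_subset
        · rw [closure_eq_self_union_frontier]
          exact union_subset subset_union_left
            (fun y hy => Or.inr (hJiW (hUfr i h1 hy)))
        · rw [closure_eq_self_union_frontier]
          exact union_subset subset_union_right (fun y hy => Or.inl (hfrWU hy))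
      have huniv : U i h1 ∪ U (i+1) h2 = univ :=
        IsClopen.eq_univ ⟨hAcl, hAop⟩ ⟨z, Or.inr hzW⟩
      exact univ_not_bounded (huniv ▸ ((hUbd i h1).union (hUbd (i+1) h2)))
    · -- closure of U (i+1) avoids J i, so it lies in U i
      have hsub2 : closure (U (i+1) h2) ⊆ (J ⟨i, by omega⟩)ᶜ := by
        intro y hy hyJ
        exact hsep ⟨y, hy, hyJ⟩
      have := subset_cci (x i h1) (hUpre (i+1) h2).closure hsub2 hmeet
      exact fun y hy => this (subset_closure hy)
  -- chains
  have chainU : ∀ (i j : ℕ) (hij : i ≤ j) (hj : j + 1 < k), U j hj ⊆ U i (by omega) := by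
    intro i j hij
    induction j, hij using Nat.le_induction with
    | base => intro hj; exact subset_rfl
    | succ j hij ih => intro hj; exact (hUU j hj).trans (ih (by omega))
  have chainJ : ∀ (i j : ℕ) (hij : i < j) (hj : j < k), J ⟨j, hj⟩ ⊆ U i (by omega) := by
    intro i j hij hj
    obtain ⟨m, rfl⟩ : ∃ m, j = m + 1 := ⟨j - 1, by omega⟩
    rcases Nat.lt_succ_iff_lt_or_eq.mp hij with hlt | heq
    · exact (hUJ m hj).trans (chainU i m (by omega) hj)
    · subst heq; exact hUJ i hj
  have hdisj : ∀ (i j : ℕ) (hij : i < j) (hj : j < k),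
      ∀ y, y ∈ J ⟨j, hj⟩ → y ∉ J ⟨i, by omega⟩ := by
    intro i j hij hj y hyj hyi
    exact (hUdisj i (by omega) (chainJ i j hij hj hyj)) hyi
  -- a base point on the innermost cycle
  obtain ⟨p, hp⟩ := hJne ⟨k - 1, by omega⟩
  set e0 : EuclideanSpace ℝ (Fin 2) := EuclideanSpace.single (0 : Fin 2) (1:ℝ) with he0def
  have he0 : e0 ≠ 0 := by
    intro h
    have : ‖e0‖ = 1 := by rw [he0def, EuclideanSpace.norm_single]; simp
    rw [h, norm_zero] at this
    exact one_ne_zero this.symm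
  have hpU : ∀ (i : ℕ) (h : i + 1 < k), p ∈ U i h := by
    intro i h
    exact chainJ i (k-1) (by omega) (by omega) hp
  -- rays from p hit every outer cycle, in both directions
  have hray : ∀ (i : ℕ) (h : i + 1 < k) (d : EuclideanSpace ℝ (Fin 2)), d ≠ 0 →
      ∃ t : ℝ, 0 < t ∧ p + t • d ∈ J ⟨i, by omega⟩ := by
    intro i h d hd
    obtain ⟨t, ht, htf⟩ := ray_hits_frontier (hUopen i h) (hUbd i h) hd (hpU i h)
    exact ⟨t, ht, hUfr i h htf⟩
  have hrayp : ∀ i : Fin (k-1), ∃ t : ℝ, 0 < t ∧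
      p + t • e0 ∈ J ⟨i, by have := i.2; omega⟩ :=
    fun i => hray i (by have := i.2; omega) e0 he0
  choose tp htp0 htpJ using hrayp
  have hraym : ∀ i : Fin (k-1), ∃ t : ℝ, 0 < t ∧
      p + t • (-e0) ∈ J ⟨i, by have := i.2; omega⟩ :=
    fun i => hray i (by have := i.2; omega) (-e0) (neg_ne_zero.mpr he0)
  choose tm htm0 htmJ using hraym
  -- points on the line p + t • e0
  have hparam : ∀ t1 t2 : ℝ, p + t1 • e0 = p + t2 • e0 → t1 = t2 := by
    intro t1 t2 hEq
    have h1 : (t1 - t2) • e0 = 0 := by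
      rw [sub_smul, sub_eq_zero]
      exact add_left_cancel hEq
    rcases smul_eq_zero.mp h1 with h | h
    · linarith [sub_eq_zero.mp h]
    · exact absurd h he0
  have hmJ : ∀ i : Fin (k-1), p + (-(tm i)) • e0 ∈ J ⟨i, by have := i.2; omega⟩ := by
    intro i
    have := htmJ i
    rwa [smul_neg, ← neg_smul] at this
  have hJdisjF : ∀ (a b : Fin (k-1)), a ≠ b → ∀ y,
      y ∈ J ⟨a, by have := a.2; omega⟩ → y ∉ J ⟨b, by have := b.2; omega⟩ := by
    intro a b hab y hya hyb
    rcases lt_or_gt_of_ne (fun h => hab (Fin.ext h)) with h | h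
    · exact hdisj a b h (by have := b.2; omega) y hyb hya
    · exact hdisj b a h (by have := a.2; omega) y hya hyb
  -- p is on no outer cycle
  have hpnot : ∀ i : Fin (k-1), p ∉ J ⟨i, by have := i.2; omega⟩ := by
    intro i hpi
    exact hdisj i (k-1) (by have := i.2; omega) (by omega) p hp hpi
  -- the finite set of parameters
  let F : Fin (k-1) → ℝ := fun i => tp i
  let Gm : Fin (k-1) → ℝ := fun i => -(tm i)
  have hF0 : ∀ i, 0 < F i := htp0
  have hG0 : ∀ i, Gm i < 0 := fun i => neg_neg_iff_pos.mpr (htm0 i)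
  have hFJ : ∀ i : Fin (k-1), p + F i • e0 ∈ J ⟨i, by have := i.2; omega⟩ := htpJ
  have hGJ : ∀ i : Fin (k-1), p + Gm i • e0 ∈ J ⟨i, by have := i.2; omega⟩ := hmJ
  have hFinj : Function.Injective F := by
    intro a b hEq
    by_contra hne
    have h2 : p + F a • e0 ∈ J ⟨b, by have := b.2; omega⟩ := by
      rw [hEq]; exact hFJ b
    exact hJdisjF a b hne _ (hFJ a) h2
  have hGinj : Function.Injective Gm := by
    intro a b hEq
    by_contra hne
    have h2 : p + Gm a • e0 ∈ J ⟨b, by have := b.2; omega⟩ := by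
      rw [hEq]; exact hGJ b
    exact hJdisjF a b hne _ (hGJ a) h2
  set S : Finset ℝ :=
    insert 0 ((Finset.image F Finset.univ) ∪ (Finset.image Gm Finset.univ)) with hS
  have hcardS : 2 * (k - 1) + 1 ≤ S.card := by
    rw [hS]
    rw [Finset.card_insert_of_notMem]
    · rw [Finset.card_union_of_disjoint]
      · rw [Finset.card_image_of_injective _ hFinj, Finset.card_image_of_injective _ hGinj]
        simp; omega
      · rw [Finset.disjoint_left]
        intro t htF htG
        obtain ⟨a, _, ha⟩ := Finset.mem_image.mp htF
        obtain ⟨b, _, hb⟩ := Finset.mem_image.mp htG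
        have h1 : 0 < F a := hF0 a
        have h2 : Gm b < 0 := hG0 b
        rw [ha] at h1; rw [hb] at h2; linarith
    · intro h0
      rcases Finset.mem_union.mp h0 with h | h
      · obtain ⟨a, _, ha⟩ := Finset.mem_image.mp h
        have h1 : 0 < F a := hF0 a; rw [ha] at h1; linarith
      · obtain ⟨b, _, hb⟩ := Finset.mem_image.mp h
        have h2 : Gm b < 0 := hG0 b; rw [hb] at h2; linarith
  -- every parameter in S gives a point on some circle of 𝒞
  have hmem : ∀ t ∈ S, ∃ C ∈ 𝒞, p + t • e0 ∈ C := by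
    intro t ht
    rw [hS, Finset.mem_insert] at ht
    rcases ht with rfl | ht
    · refine hJcirc ⟨k-1, by omega⟩ p hp |>.imp fun C hC => ⟨hC.1, by simpa using hC.2⟩
    · rcases Finset.mem_union.mp ht with h | h
      · obtain ⟨a, _, ha⟩ := Finset.mem_image.mp h
        rw [← ha]
        exact hJcirc _ _ (hFJ a)
      · obtain ⟨b, _, hb⟩ := Finset.mem_image.mp h
        rw [← hb]
        exact hJcirc _ _ (hGJ b)
  -- each circle accounts for at most two parameters
  have hfilter : ∀ C ∈ 𝒞, (S.filter (fun t => p + t • e0 ∈ C)).card ≤ 2 := by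
    intro C hC
    obtain ⟨P, cc, r, hrank, hcP, hr, hCeq⟩ := hcirc C hC
    obtain ⟨a, b, hab⟩ := line_sphere_subset_pair p e0 cc he0 r
    have hsubs : S.filter (fun t => p + t • e0 ∈ C) ⊆ {a, b} := by
      intro t ht
      have ht2 := (Finset.mem_filter.mp ht).2
      rw [hCeq] at ht2
      have := hab (show t ∈ {t : ℝ | dist (p + t • e0) cc = r} from ht2.2)
      simpa using this
    exact (Finset.card_le_card hsubs).trans ((Finset.card_insert_le _ _).trans (by simp))
  have hSsub : S ⊆ 𝒞.biUnion (fun C => S.filter (fun t => p + t • e0 ∈ C)) := by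
    intro t ht
    obtain ⟨C, hC, hmemC⟩ := hmem t ht
    exact Finset.mem_biUnion.mpr ⟨C, hC, Finset.mem_filter.mpr ⟨ht, hmemC⟩⟩
  have hfinal : S.card ≤ 2 * 𝒞.card := by
    calc S.card ≤ (𝒞.biUnion (fun C => S.filter (fun t => p + t • e0 ∈ C))).card :=
          Finset.card_le_card hSsub
      _ ≤ ∑ C ∈ 𝒞, (S.filter (fun t => p + t • e0 ∈ C)).card := Finset.card_biUnion_le
      _ ≤ ∑ _C ∈ 𝒞, 2 := Finset.sum_le_sum hfilter
      _ = 2 * 𝒞.card := by rw [Finset.sum_const, smul_eq_mul, mul_comm]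
  omega
end
end

section
/- Let 1 ≤ l < d and let G be a finite simple graph that admits a crossing-free straight-line drawing in ℝ^d whose edge segments are contained in the union of r affine subspaces of dimension l. Then G admits a crossing-free circular-arc drawing in ℝ^d whose arcs are contained in the union of r spheres of dimension l. In particular, σ^l_d(G) ≤ ρ^l_d(G). -/
open Set EuclideanGeometry

noncomputable section

/-- Inversion of an affine subspace not through the center lands in a sphere. -/
lemma inversion_image_subset_sphere {d m : ℕ} (hm : 1 ≤ m)
    (A : AffineSubspace ℝ (EuclideanSpace ℝ (Fin d)))
    (hA : Module.finrank ℝ A.direction = m)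
    (c : EuclideanSpace ℝ (Fin d)) (hc : c ∉ A) :
    ∃ (P : AffineSubspace ℝ (EuclideanSpace ℝ (Fin d)))
      (z : EuclideanSpace ℝ (Fin d)) (ρ : ℝ),
      Module.finrank ℝ P.direction = m + 1 ∧ z ∈ P ∧ 0 < ρ ∧
      EuclideanGeometry.inversion c 1 '' (A : Set _) ⊆ {x | x ∈ P ∧ dist x z = ρ} := by
  haveI : Nonempty A := by
    have hne : A ≠ ⊥ := by
      intro h
      rw [h, AffineSubspace.direction_bot] at hA
      simp at hA; omega
    obtain ⟨a, ha⟩ := (AffineSubspace.nonempty_iff_ne_bot A).mpr hne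
    exact ⟨⟨a, ha⟩⟩
  set p : EuclideanSpace ℝ (Fin d) := ((EuclideanGeometry.orthogonalProjection A c : A) : EuclideanSpace ℝ (Fin d)) with hp_def
  have hp : p ∈ A := (EuclideanGeometry.orthogonalProjection A c).2
  have horth : c -ᵥ p ∈ A.directionᗮ :=
    EuclideanGeometry.vsub_orthogonalProjection_mem_direction_orthogonal A c
  have hpc : p ≠ c := fun h => hc (h ▸ hp)
  set w : EuclideanSpace ℝ (Fin d) := p - c with hw_def
  have hw : w ≠ 0 := sub_ne_zero.mpr hpc
  set D : ℝ := ‖w‖ with hD_def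
  have hD : 0 < D := norm_pos_iff.mpr hw
  -- key inner product identity
  have hkey : ∀ x ∈ A, inner ℝ (x - c) w = (D : ℝ) ^ 2 := by
    intro x hx
    have h1 : (x : EuclideanSpace ℝ (Fin d)) - c = (x - p) + w := by
      rw [hw_def]; abel
    have h2 : inner ℝ (x - p) w = (0 : ℝ) := by
      have hxp : x - p ∈ A.direction := by
        simpa [vsub_eq_sub] using AffineSubspace.vsub_mem_direction hx hp
      have : inner ℝ (x - p) (c - p) = (0 : ℝ) := by
        have := horth (x - p) (by simpa [vsub_eq_sub] using hxp)
        simpa [vsub_eq_sub, real_inner_comm] using this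
      have hwcp : w = -(c - p) := by rw [hw_def]; abel
      rw [hwcp, inner_neg_right, this, neg_zero]
    rw [h1, inner_add_left, h2, zero_add, real_inner_self_eq_norm_sq]
  set P : AffineSubspace ℝ (EuclideanSpace ℝ (Fin d)) :=
    affineSpan ℝ (insert c (A : Set _)) with hP_def
  have hcP : c ∈ P := mem_affineSpan ℝ (mem_insert _ _)
  have hAP : (A : Set (EuclideanSpace ℝ (Fin d))) ⊆ P :=
    (subset_insert _ _).trans (subset_affineSpan ℝ _)
  have hpP : p ∈ P := hAP hp
  set z : EuclideanSpace ℝ (Fin d) := (1 / (2 * D ^ 2)) • (p -ᵥ c) +ᵥ c with hz_def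
  refine ⟨P, z, 1 / (2 * D), ?_, ?_, by positivity, ?_⟩
  · -- dimension
    have hdir : P.direction = Submodule.span ℝ {c -ᵥ p} ⊔ A.direction :=
      AffineSubspace.direction_affineSpan_insert hp
    have hcpd : c -ᵥ p ∉ A.direction := by
      intro h
      exact hc (by simpa using AffineSubspace.vadd_mem_of_mem_direction h hp)
    have hcp0 : c -ᵥ p ≠ 0 := by
      simpa [vsub_eq_sub, sub_eq_zero] using fun h => hpc h.symm
    have hdisj : Disjoint (Submodule.span ℝ {c -ᵥ p}) A.direction :=
      ((Submodule.disjoint_span_singleton' hcp0).mpr hcpd).symm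
    rw [hdir]
    have := Submodule.finrank_sup_add_finrank_inf_eq (Submodule.span ℝ {c -ᵥ p}) A.direction
    rw [hdisj.eq_bot] at this
    simp only [finrank_bot, add_zero] at this
    rw [this, finrank_span_singleton hcp0, hA, add_comm]
  · -- z ∈ P
    exact AffineSubspace.smul_vsub_vadd_mem P _ hpP hcP hcP
  · -- image subset
    rintro _ ⟨x, hx, rfl⟩
    have hxc : x ≠ c := fun h => hc (h ▸ hx)
    set v : EuclideanSpace ℝ (Fin d) := x - c with hv_def
    have hv : v ≠ 0 := sub_ne_zero.mpr hxc
    have hnv : ‖v‖ ≠ 0 := norm_ne_zero_iff.mpr hv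
    constructor
    · exact AffineSubspace.smul_vsub_vadd_mem P _ (hAP hx) hcP hcP
    · -- distance computation
      have hinv : EuclideanGeometry.inversion c 1 x = (1 / ‖v‖ ^ 2) • v +ᵥ c := by
        rw [EuclideanGeometry.inversion]
        congr 1
        rw [dist_eq_norm, ← hv_def, div_pow, one_pow, vsub_eq_sub, ← hv_def]
      have hsub : EuclideanGeometry.inversion c 1 x - z
          = (1 / ‖v‖ ^ 2) • v - (1 / (2 * D ^ 2)) • w := by
        rw [hinv, hz_def]
        simp only [vadd_eq_add, vsub_eq_sub, ← hw_def]
        abel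
      have hvw : inner ℝ v w = (D : ℝ) ^ 2 := hkey x hx
      have hsq : ‖(1 / ‖v‖ ^ 2) • v - (1 / (2 * D ^ 2)) • w‖ ^ 2 = (1 / (2 * D)) ^ 2 := by
        rw [norm_sub_sq_real, real_inner_smul_left, real_inner_smul_right, hvw,
          norm_smul, norm_smul, Real.norm_eq_abs, Real.norm_eq_abs,
          abs_of_nonneg (by positivity : (0:ℝ) ≤ 1 / ‖v‖ ^ 2),
          abs_of_nonneg (by positivity : (0:ℝ) ≤ 1 / (2 * D ^ 2)), ← hD_def]
        field_simp
        ring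
      have : dist (EuclideanGeometry.inversion c 1 x) z = 1 / (2 * D) := by
        rw [dist_eq_norm, hsub]
        have h1 : (0:ℝ) ≤ ‖(1 / ‖v‖ ^ 2) • v - (1 / (2 * D ^ 2)) • w‖ := norm_nonneg _
        have h2 : (0:ℝ) ≤ 1 / (2 * D) := by positivity
        nlinarith [hsq]
      exact this



lemma exists_center_off {d : ℕ}
    (F : Finset (AffineSubspace ℝ (EuclideanSpace ℝ (Fin d))))
    (hF : ∀ A ∈ F, A ≠ ⊤) : ∃ c, ∀ A ∈ F, c ∉ A := by
  by_contra h
  push_neg at h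
  have hnull : MeasureTheory.volume (⋃ A ∈ F, (A : Set (EuclideanSpace ℝ (Fin d)))) = 0 := by
    refine (MeasureTheory.measure_biUnion_null_iff F.countable_toSet).mpr ?_
    intro A hA
    exact MeasureTheory.Measure.addHaar_affineSubspace _ A (hF A hA)
  have huniv : (univ : Set (EuclideanSpace ℝ (Fin d))) ⊆ ⋃ A ∈ F, (A : Set _) := by
    intro c _
    obtain ⟨A, hA, hcA⟩ := h c
    exact mem_biUnion hA hcA
  have : MeasureTheory.volume (univ : Set (EuclideanSpace ℝ (Fin d))) = 0 :=
    le_antisymm (hnull ▸ MeasureTheory.measure_mono huniv) zero_le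
  exact (isOpen_univ.measure_ne_zero MeasureTheory.volume univ_nonempty) this

lemma line_ne_top {d : ℕ} (hd : 2 ≤ d) (a b : EuclideanSpace ℝ (Fin d)) :
    affineSpan ℝ ({a, b} : Set (EuclideanSpace ℝ (Fin d))) ≠ ⊤ := by
  intro h
  have h1 : Module.finrank ℝ (vectorSpan ℝ ({a, b} : Set (EuclideanSpace ℝ (Fin d)))) = d := by
    rw [← direction_affineSpan, h, AffineSubspace.direction_top, finrank_top,
      finrank_euclideanSpace_fin]
  rw [vectorSpan_pair] at h1
  rcases eq_or_ne (a -ᵥ b) 0 with h0 | h0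
  · rw [h0] at h1; rw [Submodule.span_zero_singleton, finrank_bot] at h1; omega
  · rw [finrank_span_singleton h0] at h1; omega

lemma isArc_inversion_segment {d : ℕ} (a b c : EuclideanSpace ℝ (Fin d)) (hab : a ≠ b)
    (hc : c ∉ affineSpan ℝ ({a, b} : Set (EuclideanSpace ℝ (Fin d)))) :
    IsArc d (EuclideanGeometry.inversion c 1 '' segment ℝ a b) := by
  have hline : Module.finrank ℝ (affineSpan ℝ ({a, b} : Set (EuclideanSpace ℝ (Fin d)))).direction = 1 := by
    rw [direction_affineSpan, vectorSpan_pair, finrank_span_singleton (vsub_ne_zero.mpr hab)]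
  obtain ⟨P, z, ρ, h1, h2, h3, h4⟩ := inversion_image_subset_sphere le_rfl _ hline c hc
  have hsegline : segment ℝ a b ⊆ affineSpan ℝ ({a, b} : Set (EuclideanSpace ℝ (Fin d))) :=
    (affineSpan ℝ _).convex.segment_subset (mem_affineSpan ℝ (by simp))
      (mem_affineSpan ℝ (by simp))
  have hcseg : ∀ x ∈ segment ℝ a b, x ≠ c := fun x hx hxc => hc (hxc ▸ hsegline hx)
  have hcont : ContinuousOn (EuclideanGeometry.inversion c 1) (segment ℝ a b) :=
    ContinuousOn.inversion continuousOn_const continuousOn_const continuousOn_id hcseg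
  have hcomp : IsCompact (segment ℝ a b) := by
    rw [segment_eq_image]
    exact isCompact_Icc.image (by fun_prop)
  exact ⟨{x | x ∈ P ∧ dist x z = ρ}, ⟨P, z, ρ, h1, h2, h3, rfl⟩,
    (Set.image_mono hsegline).trans h4,
    hcomp.image_of_continuousOn hcont,
    ((convex_segment a b).isConnected ⟨a, left_mem_segment ℝ a b⟩).image _ hcont⟩

/-- A crossing-free straight-line drawing of a simple graph `G` in `ℝ^d`. -/
structure StraightLineDrawing (d : ℕ) {V : Type*} (G : SimpleGraph V) where
  pos : V → EuclideanSpace ℝ (Fin d)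
  inj : Function.Injective pos
  crossFree : ∀ u v x y : V, G.Adj u v → G.Adj x y → s(u, v) ≠ s(x, y) →
    segment ℝ (pos u) (pos v) ∩ segment ℝ (pos x) (pos y)
      = pos '' ({u, v} ∩ {x, y} : Set V)
  vertex_mem : ∀ u v w : V, G.Adj u v → pos w ∈ segment ℝ (pos u) (pos v) → w = u ∨ w = v

/-- Let `1 ≤ l < d`.  If a finite simple graph `G` admits a crossing-free straight-line
drawing in `ℝ^d` whose edge segments are contained in the union of `r` affine subspaces of
dimension `l`, then `G` admits a crossing-free circular-arc drawing in `ℝ^d` whose arcs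
are contained in the union of `r` spheres of dimension `l`.
In particular, `σ^l_d(G) ≤ ρ^l_d(G)`. -/
theorem sphere_cover_le_affine_cover (l d : ℕ) (hl : 1 ≤ l) (hld : l < d)
    {V : Type*} [Fintype V] (G : SimpleGraph V) (r : ℕ)
    (D : StraightLineDrawing d G)
    (𝒜 : Finset (AffineSubspace ℝ (EuclideanSpace ℝ (Fin d))))
    (hcard : 𝒜.card = r)
    (hdim : ∀ A ∈ 𝒜, Module.finrank ℝ A.direction = l)
    (hcov : ∀ u v : V, G.Adj u v →
      segment ℝ (D.pos u) (D.pos v)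
        ⊆ ⋃ A ∈ 𝒜, (A : Set (EuclideanSpace ℝ (Fin d)))) :
    ∃ (D' : CircularArcDrawing d G) (𝒮 : Finset (Set (EuclideanSpace ℝ (Fin d)))),
      (∀ S ∈ 𝒮, IsSphereDim d l S) ∧ 𝒮.card ≤ r ∧
      ∀ e ∈ G.edgeSet, D'.arc e ⊆ ⋃ S ∈ 𝒮, S := by
  classical
  have hd2 : 2 ≤ d := by omega
  -- choose a center avoiding all subspaces and all lines through adjacent vertex pairs
  set F : Finset (AffineSubspace ℝ (EuclideanSpace ℝ (Fin d))) :=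
    𝒜 ∪ (Finset.univ.filter fun p : V × V => G.Adj p.1 p.2).image
      (fun p : V × V => affineSpan ℝ ({D.pos p.1, D.pos p.2} : Set (EuclideanSpace ℝ (Fin d))))
    with hF_def
  have hF : ∀ A ∈ F, A ≠ ⊤ := by
    intro A hA
    rcases Finset.mem_union.mp hA with h | h
    · intro htop
      have := hdim A h
      rw [htop, AffineSubspace.direction_top, finrank_top, finrank_euclideanSpace_fin] at this
      omega
    · obtain ⟨p, _, rfl⟩ := Finset.mem_image.mp h
      exact line_ne_top hd2 _ _
  obtain ⟨c, hcF⟩ := exists_center_off F hF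
  have hc𝒜 : ∀ A ∈ 𝒜, c ∉ A := fun A hA => hcF A (Finset.mem_union_left _ hA)
  have hcline : ∀ u v : V, G.Adj u v →
      c ∉ affineSpan ℝ ({D.pos u, D.pos v} : Set (EuclideanSpace ℝ (Fin d))) := by
    intro u v huv
    refine hcF _ (Finset.mem_union_right _ (Finset.mem_image.mpr ⟨(u, v), ?_, rfl⟩))
    simp [huv]
  set inv : EuclideanSpace ℝ (Fin d) → EuclideanSpace ℝ (Fin d) :=
    EuclideanGeometry.inversion c 1 with hinv_def
  have hinj : Function.Injective inv := EuclideanGeometry.inversion_injective c one_ne_zero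
  -- the arcs
  set arcf : Sym2 V → Set (EuclideanSpace ℝ (Fin d)) :=
    Sym2.lift ⟨fun u v => inv '' segment ℝ (D.pos u) (D.pos v),
      fun u v => by simp only [segment_symm]⟩ with harcf_def
  have harcf : ∀ u v : V, arcf s(u, v) = inv '' segment ℝ (D.pos u) (D.pos v) := fun u v => rfl
  -- the spheres
  have hS : ∀ A ∈ 𝒜, ∃ S, IsSphereDim d l S ∧
      inv '' (A : Set (EuclideanSpace ℝ (Fin d))) ⊆ S := by
    intro A hA
    obtain ⟨P, z, ρ, h1, h2, h3, h4⟩ :=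
      inversion_image_subset_sphere hl A (hdim A hA) c (hc𝒜 A hA)
    exact ⟨{x | x ∈ P ∧ dist x z = ρ}, ⟨P, z, ρ, h1, h2, h3, rfl⟩, h4⟩
  choose f hf1 hf2 using hS
  set 𝒮 : Finset (Set (EuclideanSpace ℝ (Fin d))) :=
    𝒜.attach.image (fun a => f a.1 a.2) with h𝒮_def
  refine ⟨⟨fun v => inv (D.pos v), hinj.comp D.inj, arcf, ?_, ?_, ?_, ?_⟩, 𝒮, ?_, ?_, ?_⟩
  · -- arc_isArc
    intro e he
    induction e using Sym2.ind with
    | _ u v =>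
      have hadj : G.Adj u v := (SimpleGraph.mem_edgeSet G).mp he
      rw [harcf]
      exact isArc_inversion_segment _ _ _ (D.inj.ne hadj.ne) (hcline u v hadj)
  · -- endpoint_mem
    intro e he w hw
    induction e using Sym2.ind with
    | _ u v =>
      rw [harcf]
      rcases Sym2.mem_iff.mp hw with rfl | rfl
      · exact mem_image_of_mem inv (left_mem_segment ℝ _ _)
      · exact mem_image_of_mem inv (right_mem_segment ℝ _ _)
  · -- crossFree
    intro e he f' hf' hne
    induction e using Sym2.ind with
    | _ u v =>
      induction f' using Sym2.ind with
      | _ x y =>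
        have hadj1 : G.Adj u v := (SimpleGraph.mem_edgeSet G).mp he
        have hadj2 : G.Adj x y := (SimpleGraph.mem_edgeSet G).mp hf'
        have hXY : {w | w ∈ s(u, v) ∧ w ∈ s(x, y)} = ({u, v} ∩ {x, y} : Set V) := by
          ext w; simp [Sym2.mem_iff]
        rw [harcf, harcf, ← Set.image_inter hinj,
          D.crossFree u v x y hadj1 hadj2 hne, hXY, ← Set.image_comp]
        rfl
  · -- vertex_mem
    intro e he w hw
    induction e using Sym2.ind with
    | _ u v =>
      rw [harcf] at hw
      obtain ⟨x, hx, hxw⟩ := hw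
      have hx' : D.pos w = x := hinj hxw.symm
      rw [← hx'] at hx
      have hadj : G.Adj u v := (SimpleGraph.mem_edgeSet G).mp he
      rcases D.vertex_mem u v w hadj hx with rfl | rfl
      · exact Sym2.mem_mk_left _ _
      · exact Sym2.mem_mk_right _ _
  · -- spheres are spheres
    intro S hSmem
    obtain ⟨a, _, rfl⟩ := Finset.mem_image.mp hSmem
    exact hf1 a.1 a.2
  · -- cardinality
    calc 𝒮.card ≤ 𝒜.attach.card := Finset.card_image_le
    _ = 𝒜.card := Finset.card_attach
    _ = r := hcard
  · -- coverage
    intro e he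
    induction e using Sym2.ind with
    | _ u v =>
      have hadj : G.Adj u v := (SimpleGraph.mem_edgeSet G).mp he
      show inv '' segment ℝ (D.pos u) (D.pos v) ⊆ ⋃ S ∈ 𝒮, S
      rintro _ ⟨x, hx, rfl⟩
      obtain ⟨A, hA, hxA⟩ := Set.mem_iUnion₂.mp (hcov u v hadj hx)
      refine Set.mem_biUnion (Finset.mem_image.mpr ⟨⟨A, hA⟩, Finset.mem_attach _ _, rfl⟩) ?_
      exact hf2 A hA (mem_image_of_mem inv hxA)
end
end
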